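/- Cutting a nonempty endpoint edge set strictly increases the weight of an X-φ-forest: if F is an X-φ-forest and E is a nonempty endpoint edge set of F, then ω(F ÷ E) > ω(F), where ω(F) = 2(|F|−1) − q(F). Consequently, ω(T1,T2) = 0 if and only if T1 = T2. -/

import Mathlib

/-!
Common combinatorial framework for unrooted phylogenetic trees,
SPR / TBR / replug operations, agreement forests, endpoint agreement
forests and socket agreement forests, following
Whidden & Matsen, "Calculating the Unrooted Subtree Prune-and-Regraft
Distance".
-/

noncomputable section
open scoped Classical

namespace USPR

/-- A finite graph on a subset of `ℕ` whose vertices are partially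
labeled by elements of `L` (`none` = unlabeled internal node). -/
structure PGraph (L : Type) where
  verts : Finset ℕ
  edges : Finset (Sym2 ℕ)
  label : ℕ → Option L

variable {L : Type}

namespace PGraph

def adj (G : PGraph L) (u v : ℕ) : Prop := s(u, v) ∈ G.edges

/-- Reachability in `G`. -/
def Reach (G : PGraph L) : ℕ → ℕ → Prop := Relation.ReflTransGen G.adj

/-- Reachability in `G` avoiding the edges in `E`. -/
def ReachAvoiding (G : PGraph L) (E : Finset (Sym2 ℕ)) : ℕ → ℕ → Prop :=
  Relation.ReflTransGen (fun x y => s(x, y) ∈ G.edges \ E)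

def degree (G : PGraph L) (v : ℕ) : ℕ := (G.edges.filter (fun e => v ∈ e)).card

/-- Well-formedness: no loops, edges join vertices, labels live on vertices. -/
def WF (G : PGraph L) : Prop :=
  (∀ e ∈ G.edges, ¬e.IsDiag ∧ ∀ v ∈ e, v ∈ G.verts) ∧
  ∀ v : ℕ, (G.label v).isSome → v ∈ G.verts

def Connected (G : PGraph L) : Prop := ∀ u ∈ G.verts, ∀ v ∈ G.verts, G.Reach u v

/-- Every edge is a bridge: the graph has no cycles. -/
def Acyclic (G : PGraph L) : Prop :=
  ∀ u v : ℕ, s(u, v) ∈ G.edges → ¬G.ReachAvoiding {s(u, v)} u v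

def IsTreeGraph (G : PGraph L) : Prop :=
  G.WF ∧ G.verts.Nonempty ∧ G.Connected ∧ G.Acyclic

/-- Number of connected components of a forest (vertices minus edges). -/
def numComponents (G : PGraph L) : ℕ := G.verts.card - G.edges.card

/-- `f` is a label-preserving isomorphism from `G` to `H`. -/
def IsomMap (G H : PGraph L) (f : ℕ → ℕ) : Prop :=
  Set.BijOn f ↑G.verts ↑H.verts ∧
  (∀ u ∈ G.verts, ∀ v ∈ G.verts, (s(u, v) ∈ G.edges ↔ s(f u, f v) ∈ H.edges)) ∧
  ∀ v ∈ G.verts, H.label (f v) = G.label v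

/-- Label-preserving isomorphism of partially labeled graphs. -/
def Isom (G H : PGraph L) : Prop := ∃ f, IsomMap G H f

end PGraph

/-- An unrooted binary phylogenetic tree whose leaves are bijectively
labeled by the elements of `s ⊆ L`. -/
def IsXTreeOn (s : Set L) (T : PGraph L) : Prop :=
  T.IsTreeGraph ∧
  (∀ v ∈ T.verts, T.degree v = 1 ∨ T.degree v = 3) ∧
  (∀ v ∈ T.verts, (T.label v).isSome ↔ T.degree v = 1) ∧
  (∀ v ∈ T.verts, ∀ x : L, T.label v = some x → x ∈ s) ∧
  ∀ x ∈ s, ∃! v, v ∈ T.verts ∧ T.label v = some x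

/-- An unrooted binary phylogenetic `X`-tree (leaves bijectively labeled
by all of `X`). -/
def IsXTree (T : PGraph L) : Prop := IsXTreeOn Set.univ T

/-! ### Prune-and-reattach moves -/

/-- The data of a prune-and-reattach move: the edge `(u,v)` is cut
(`v` being the endpoint that moves), `a` and `b` are the other two
neighbours of `v` (which get merged when `v` is suppressed), the
reattachment subdivides edge `(p,q)` with the fresh node `w`, and the
new edge is `(u,w)`. -/
structure Move where
  u : ℕ
  v : ℕ
  a : ℕ
  b : ℕ
  p : ℕ
  q : ℕ
  w : ℕ
deriving DecidableEq, Inhabited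

/-- The raw combinatorial effect of a prune-and-reattach (replug) move. -/
def ApplyMove (T : PGraph L) (m : Move) (T' : PGraph L) : Prop :=
  s(m.u, m.v) ∈ T.edges ∧
  m.u ≠ m.v ∧ m.a ≠ m.b ∧ m.a ≠ m.u ∧ m.b ≠ m.u ∧ m.a ≠ m.v ∧ m.b ≠ m.v ∧
  T.edges.filter (fun e => m.v ∈ e) =
    ({s(m.u, m.v), s(m.v, m.a), s(m.v, m.b)} : Finset (Sym2 ℕ)) ∧
  s(m.p, m.q) ∈ T.edges ∧
  s(m.p, m.q) ∉ ({s(m.u, m.v), s(m.v, m.a), s(m.v, m.b)} : Finset (Sym2 ℕ)) ∧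
  m.w ∉ T.verts ∧
  T.label m.v = none ∧ T.label m.w = none ∧
  T'.verts = insert m.w (T.verts.erase m.v) ∧
  T'.edges = (T.edges \ {s(m.u, m.v), s(m.v, m.a), s(m.v, m.b), s(m.p, m.q)}) ∪
      {s(m.a, m.b), s(m.p, m.w), s(m.w, m.q), s(m.u, m.w)} ∧
  T'.label = T.label

/-- A replug move: an arbitrary prune-and-reattach move (the result need
not be a tree). -/
def ReplugStep (T T' : PGraph L) : Prop := ∃ m : Move, ApplyMove T m T'

/-- The side condition making a prune-and-reattach move an SPR move:
the reattachment edge `(p,q)` lies in the component `T_v` of the cut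
edge (so the result is again a tree). -/
def IsSPRMoveOn (T : PGraph L) (m : Move) : Prop :=
  T.ReachAvoiding {s(m.u, m.v)} m.v m.p

/-- An unrooted SPR move. -/
def SPRStep (T T' : PGraph L) : Prop := ∃ m : Move, ApplyMove T m T' ∧ IsSPRMoveOn T m

/-- The data of a TBR move in which both endpoints of the bisected edge
`(u,v)` move: `a,b` (resp. `c,d`) are the other neighbours of `v`
(resp. `u`); the fresh node `w1` subdivides the edge `(p,q)` of `T_v`
and the fresh node `w2` subdivides the edge `(r,t)` of `T_u`; the new
edge is `(w1,w2)` and both `u` and `v` are suppressed. -/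
structure Move2 where
  u : ℕ
  v : ℕ
  a : ℕ
  b : ℕ
  c : ℕ
  d : ℕ
  p : ℕ
  q : ℕ
  r : ℕ
  t : ℕ
  w1 : ℕ
  w2 : ℕ
deriving DecidableEq, Inhabited

def ApplyTBRBoth (T : PGraph L) (m : Move2) (T' : PGraph L) : Prop :=
  s(m.u, m.v) ∈ T.edges ∧ m.u ≠ m.v ∧
  m.a ≠ m.b ∧ m.a ≠ m.u ∧ m.b ≠ m.u ∧ m.a ≠ m.v ∧ m.b ≠ m.v ∧
  m.c ≠ m.d ∧ m.c ≠ m.u ∧ m.d ≠ m.u ∧ m.c ≠ m.v ∧ m.d ≠ m.v ∧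
  T.edges.filter (fun e => m.v ∈ e) =
    ({s(m.u, m.v), s(m.v, m.a), s(m.v, m.b)} : Finset (Sym2 ℕ)) ∧
  T.edges.filter (fun e => m.u ∈ e) =
    ({s(m.u, m.v), s(m.u, m.c), s(m.u, m.d)} : Finset (Sym2 ℕ)) ∧
  s(m.p, m.q) ∈ T.edges ∧
  s(m.p, m.q) ∉ ({s(m.u, m.v), s(m.v, m.a), s(m.v, m.b)} : Finset (Sym2 ℕ)) ∧
  T.ReachAvoiding {s(m.u, m.v)} m.v m.p ∧
  s(m.r, m.t) ∈ T.edges ∧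
  s(m.r, m.t) ∉ ({s(m.u, m.v), s(m.u, m.c), s(m.u, m.d)} : Finset (Sym2 ℕ)) ∧
  T.ReachAvoiding {s(m.u, m.v)} m.u m.r ∧
  m.w1 ∉ T.verts ∧ m.w2 ∉ T.verts ∧ m.w1 ≠ m.w2 ∧
  T.label m.u = none ∧ T.label m.v = none ∧
  T.label m.w1 = none ∧ T.label m.w2 = none ∧
  T'.verts = insert m.w1 (insert m.w2 ((T.verts.erase m.u).erase m.v)) ∧
  T'.edges = (T.edges \
      {s(m.u, m.v), s(m.v, m.a), s(m.v, m.b), s(m.u, m.c), s(m.u, m.d),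
        s(m.p, m.q), s(m.r, m.t)}) ∪
      {s(m.a, m.b), s(m.c, m.d), s(m.p, m.w1), s(m.w1, m.q), s(m.r, m.w2),
        s(m.w2, m.t), s(m.w1, m.w2)} ∧
  T'.label = T.label

/-- A TBR move: either an SPR move (one endpoint of the bisected edge is
reintroduced on its own side) or a move displacing both endpoints. -/
def TBRStep (T T' : PGraph L) : Prop :=
  SPRStep T T' ∨ ∃ m : Move2, ApplyTBRBoth T m T'

/-! ### Distances -/

/-- `StepSeq step n G H`: `H` is obtained from `G` by exactly `n` `step`-moves. -/
def StepSeq (step : PGraph L → PGraph L → Prop) : ℕ → PGraph L → PGraph L → Prop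
  | 0, G, H => G = H
  | n + 1, G, H => ∃ G', step G G' ∧ StepSeq step n G' H

/-- The minimum number of `step`-moves transforming `T1` into (a tree
isomorphic to) `T2`. -/
def relDist (step : PGraph L → PGraph L → Prop) (T1 T2 : PGraph L) : ℕ :=
  sInf {n : ℕ | ∃ T', StepSeq step n T1 T' ∧ PGraph.Isom T' T2}

/-- The unrooted SPR distance. -/
def dSPR (T1 T2 : PGraph L) : ℕ := relDist SPRStep T1 T2

/-- The TBR distance. -/
def dTBR (T1 T2 : PGraph L) : ℕ := relDist TBRStep T1 T2

/-- The replug distance. -/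
def dRep (T1 T2 : PGraph L) : ℕ := relDist ReplugStep T1 T2

/-! ### Explicit move sequences -/

/-- Apply a list of replug moves. -/
def ApplySeq : PGraph L → List Move → PGraph L → Prop
  | G, [], H => G = H
  | G, m :: ms, H => ∃ G', ApplyMove G m G' ∧ ApplySeq G' ms H

/-- Apply a list of SPR moves. -/
def ApplySeqSPR : PGraph L → List Move → PGraph L → Prop
  | G, [], H => G = H
  | G, m :: ms, H => ∃ G', ApplyMove G m G' ∧ IsSPRMoveOn G m ∧ ApplySeqSPR G' ms H

/-- Apply a list of replug moves, all whose intermediate configurations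
satisfy the predicate `P`. -/
def ApplySeqMid (P : PGraph L → Prop) : PGraph L → List Move → PGraph L → Prop
  | G, [], H => G = H
  | G, m :: ms, H => ∃ G', ApplyMove G m G' ∧ P G' ∧ ApplySeqMid P G' ms H

def ReplugTransforms (T1 : PGraph L) (M : List Move) (T2 : PGraph L) : Prop :=
  ∃ T', ApplySeq T1 M T' ∧ PGraph.Isom T' T2

/-- `M` is a minimum-length sequence of replug moves from `T1` to `T2`. -/
def OptimalReplugSeq (T1 T2 : PGraph L) (M : List Move) : Prop :=
  ReplugTransforms T1 M T2 ∧ ∀ M', ReplugTransforms T1 M' T2 → M.length ≤ M'.length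

def SPRTransforms (T1 : PGraph L) (M : List Move) (T2 : PGraph L) : Prop :=
  ∃ T', ApplySeqSPR T1 M T' ∧ PGraph.Isom T' T2

/-- `M` is a minimum-length sequence of SPR moves from `T1` to `T2`. -/
def OptimalSPRSeq (T1 T2 : PGraph L) (M : List Move) : Prop :=
  SPRTransforms T1 M T2 ∧ ∀ M', SPRTransforms T1 M' T2 → M.length ≤ M'.length

/-! ### Tracking the identity of a moved edge endpoint along a sequence -/

/-- Track the identity of an edge with a distinguished endpoint through a
move, following the natural mapping between consecutive configurations.
`t = (f, x)` records the edge `(f, x)` with distinguished ("moved")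
endpoint `x`.  The track is lost (`none`) if the edge is cut at its
distinguished endpoint or subdivided. -/
def trackStep (m : Move) (t : ℕ × ℕ) : Option (ℕ × ℕ) :=
  if s(m.u, m.v) = s(t.1, t.2) then
    (if m.v = t.2 then none else some (m.w, t.2))
  else if s(m.p, m.q) = s(t.1, t.2) then none
  else if m.v = t.1 then some (if t.2 = m.a then (m.b, t.2) else (m.a, t.2))
  else if m.v = t.2 then some (t.1, if t.1 = m.a then m.b else m.a)
  else some t

def trackList : List Move → ℕ × ℕ → Option (ℕ × ℕ)
  | [], t => some t
  | m :: ms, t => (trackStep m t).bind (trackList ms)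

/-- Some two distinct moves of `M` move the same endpoint of the same
edge: the `i`-th move leaves the moved endpoint of its cut edge at the
fresh node `w`; tracking this edge-endpoint through the intermediate
moves, the `j`-th move cuts the same edge at the same endpoint. -/
def MovesSameEndpointTwice (M : List Move) : Prop :=
  ∃ i j : ℕ, i < j ∧ j < M.length ∧
    ∃ t : ℕ × ℕ,
      trackList ((M.drop (i + 1)).take (j - i - 1)) ((M[i]!).u, (M[i]!).w) = some t ∧
      s((M[j]!).u, (M[j]!).v) = s(t.1, t.2) ∧ (M[j]!).v = t.2

/-! ### Suppression and induced forests -/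

/-- One elementary suppression: remove an unlabeled degree-2 vertex
(merging its two incident edges), or delete an unlabeled vertex of
degree at most 1. -/
def SuppressStep (G G' : PGraph L) : Prop :=
  (∃ v a b : ℕ, v ∈ G.verts ∧ G.label v = none ∧ a ≠ b ∧ a ≠ v ∧ b ≠ v ∧
      G.edges.filter (fun e => v ∈ e) = ({s(v, a), s(v, b)} : Finset (Sym2 ℕ)) ∧
      G'.verts = G.verts.erase v ∧
      G'.edges = (G.edges \ {s(v, a), s(v, b)}) ∪ {s(a, b)} ∧
      G'.label = G.label) ∨
  (∃ v : ℕ, v ∈ G.verts ∧ G.label v = none ∧ G.degree v ≤ 1 ∧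
      G'.verts = G.verts.erase v ∧
      G'.edges = G.edges.filter (fun e => v ∉ e) ∧
      G'.label = G.label)

/-- No unlabeled vertex of degree less than 3 remains. -/
def Reduced (G : PGraph L) : Prop := ∀ v ∈ G.verts, G.label v = none → 3 ≤ G.degree v

/-- `G` yields `G'` by exhaustively suppressing unlabeled vertices of
degree less than 3. -/
def Yields (G G' : PGraph L) : Prop :=
  Relation.ReflTransGen SuppressStep G G' ∧ Reduced G'

def deleteEdges (G : PGraph L) (E : Finset (Sym2 ℕ)) : PGraph L :=
  ⟨G.verts, G.edges \ E, G.label⟩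

/-- `F` is the forest obtained from `G` by cutting the edge set `E`
(and suppressing), up to isomorphism. -/
def ForestOfVia (F G : PGraph L) (E : Finset (Sym2 ℕ)) : Prop :=
  E ⊆ G.edges ∧ ∃ F', Yields (deleteEdges G E) F' ∧ PGraph.Isom F' F

/-- `F` is a forest of `G`. -/
def ForestOf (F G : PGraph L) : Prop := ∃ E, ForestOfVia F G E

/-- Agreement forest of `T1` and `T2`. -/
def IsAF (F T1 T2 : PGraph L) : Prop := ForestOf F T1 ∧ ForestOf F T2

/-- A maximal agreement forest: an AF which is not a forest of any other
AF of the trees. -/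
def IsMaximalAF (F T1 T2 : PGraph L) : Prop :=
  IsAF F T1 T2 ∧ ∀ F', IsAF F' T1 T2 → ForestOf F F' → PGraph.Isom F' F

/-- A maximum agreement forest: an AF with the fewest components. -/
def IsMAF (F T1 T2 : PGraph L) : Prop :=
  IsAF F T1 T2 ∧ ∀ F', IsAF F' T1 T2 → F.numComponents ≤ F'.numComponents

/-! ### Splits, clusters and pendant subtrees -/

/-- The labels appearing on the `u`-side of the edge `(u,v)`. -/
def sideLabels (G : PGraph L) (u v : ℕ) : Set L :=
  {x | ∃ w ∈ G.verts, G.label w = some x ∧ G.ReachAvoiding {s(u, v)} u w}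

/-- The edge `(u,v)` of the tree `T` induces the bipartition `(A, Aᶜ)`
of the label set. -/
def InducesSplit (T : PGraph L) (A : Set L) : Prop :=
  ∃ u v, s(u, v) ∈ T.edges ∧ sideLabels T u v = A ∧ sideLabels T v u = Aᶜ

/-- The (possibly disconnected) configuration `G` respects the
bipartition `(A, Aᶜ)`: some edge has only `A`-labels on one side and
only `Aᶜ`-labels on the other. -/
def RespectsSplit (G : PGraph L) (A : Set L) : Prop :=
  ∃ u v, s(u, v) ∈ G.edges ∧ sideLabels G u v ⊆ A ∧ sideLabels G v u ⊆ Aᶜ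

/-- The vertices on the `r`-side of the edge `(u,r)`. -/
def sideVerts (T : PGraph L) (u r : ℕ) : Finset ℕ :=
  T.verts.filter (fun w => T.ReachAvoiding {s(u, r)} r w)

/-- The pendant subtree attached at `r` across the edge `(u,r)`. -/
def subtreeAt (T : PGraph L) (u r : ℕ) : PGraph L :=
  ⟨sideVerts T u r, T.edges.filter (fun e => ∀ v ∈ e, v ∈ sideVerts T u r), T.label⟩

/-- Replace the pendant subtree attached at `r` across the edge `(u,r)`
by the single leaf `r`, now labeled `y`. -/
def reduceSubtree (T : PGraph L) (u r : ℕ) (y : L) : PGraph L :=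
  ⟨T.verts.filter (fun w => w = r ∨ w ∉ sideVerts T u r),
   T.edges.filter (fun e => ∀ v ∈ e, v = r ∨ v ∉ sideVerts T u r),
   fun w => if w = r then some y else T.label w⟩

/-! ### X-φ-forests and endpoint agreement forests -/

/-- View an `X`-labeled graph as an `X`-φ-labeled graph with no φ-nodes.
(A vertex label `some none` denotes a φ-node.) -/
def toPhi {X : Type} (T : PGraph X) : PGraph (Option X) :=
  ⟨T.verts, T.edges, fun v => (T.label v).map some⟩

/-- An `X`-φ-forest on label set `s`: an acyclic graph, vertices of
degree 0, 1 or 3, leaves labeled (by `X`-labels, bijectively with `s`,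
or by φ), internal vertices of degree 3 unlabeled. -/
def IsPhiForestOn {X : Type} (s : Set X) (F : PGraph (Option X)) : Prop :=
  F.WF ∧ F.Acyclic ∧
  (∀ v ∈ F.verts, F.degree v = 0 ∨ F.degree v = 1 ∨ F.degree v = 3) ∧
  (∀ v ∈ F.verts, (F.label v).isSome ↔ F.degree v ≤ 1) ∧
  (∀ v ∈ F.verts, F.label v = some none → F.degree v = 1) ∧
  (∀ v ∈ F.verts, ∀ x : X, F.label v = some (some x) → x ∈ s) ∧
  ∀ x ∈ s, ∃! v, v ∈ F.verts ∧ F.label v = some (some x)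

def IsPhiForest {X : Type} (F : PGraph (Option X)) : Prop :=
  IsPhiForestOn Set.univ F

/-- An endpoint edge: an edge together with a proper subset of its
endpoints (`keep = some k` marks the augmented endpoint `k`, which
receives a φ-node when the edge is cut; `keep = none` marks no
endpoint). -/
structure EEdge where
  e : Sym2 ℕ
  keep : Option ℕ
deriving DecidableEq

/-- `E` is a set of endpoint edges of `T`. -/
def EEdgeSetOK {X : Type} (T : PGraph (Option X)) (E : Finset EEdge) : Prop :=
  (∀ ee ∈ E, ee.e ∈ T.edges ∧ ¬ee.e.IsDiag ∧ ∀ k : ℕ, ee.keep = some k → k ∈ ee.e) ∧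
  (∀ ee ∈ E, ∀ k : ℕ, ee.keep = some k → T.label k ≠ some none) ∧
  ∀ ee ∈ E, ∀ ee' ∈ E, ee.e = ee'.e → ee = ee'

/-- `G` is the result of cutting the endpoint edge set `E` in `T`:
the edges of `E` are deleted and a fresh φ-leaf is attached to each
augmented endpoint. -/
def CutEEdges {X : Type} (T : PGraph (Option X)) (E : Finset EEdge)
    (G : PGraph (Option X)) : Prop :=
  EEdgeSetOK T E ∧
  ∃ φf : EEdge → ℕ, Set.InjOn φf ↑E ∧ (∀ ee ∈ E, φf ee ∉ T.verts) ∧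
    G.verts = T.verts ∪ (E.filter (fun ee => ee.keep ≠ none)).image φf ∧
    G.edges = (T.edges \ E.image (fun ee => ee.e)) ∪
      (E.filter (fun ee => ee.keep ≠ none)).image
        (fun ee => s(ee.keep.getD 0, φf ee)) ∧
    (∀ v ∈ T.verts, G.label v = T.label v) ∧
    (∀ ee ∈ E, ee.keep ≠ none → G.label (φf ee) = some none) ∧
    ∀ v : ℕ, v ∉ G.verts → G.label v = none

/-- `F` is an endpoint forest of `T`: it is obtained, up to isomorphism,
by cutting an endpoint edge set of `T` and suppressing. -/
def EndpointForestOf {X : Type} (F T : PGraph (Option X)) : Prop :=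
  ∃ E G F', CutEEdges T E G ∧ Yields G F' ∧ PGraph.Isom F' F

/-- An endpoint agreement forest (EAF) of the `X`-trees `T1` and `T2`. -/
def IsEAF {X : Type} (F : PGraph (Option X)) (T1 T2 : PGraph X) : Prop :=
  IsPhiForest F ∧ EndpointForestOf F (toPhi T1) ∧ EndpointForestOf F (toPhi T2)

/-- Number of φ-nodes of an `X`-φ-forest. -/
def phiCount {X : Type} (F : PGraph (Option X)) : ℕ :=
  (F.verts.filter (fun v => F.label v = some none)).card

/-- The weight `ω(F) = 2(|F| - 1) - q(F)` of an `X`-φ-forest. -/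
def weight {X : Type} (F : PGraph (Option X)) : ℤ :=
  2 * ((F.numComponents : ℤ) - 1) - (phiCount F : ℤ)

/-- The minimum weight of an endpoint agreement forest of `T1` and `T2`. -/
def minEAFWeight {X : Type} (T1 T2 : PGraph X) : ℤ :=
  sInf {w : ℤ | ∃ F, IsEAF F T1 T2 ∧ weight F = w}

/-- Delete the φ-leaves (and their pendant edges) of an `X`-φ-forest. -/
def removePhi {X : Type} (F : PGraph (Option X)) : PGraph (Option X) :=
  ⟨F.verts.filter (fun v => F.label v ≠ some none),
   F.edges.filter (fun e => ∀ v ∈ e, F.label v ≠ some none),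
   fun v => if F.label v = some none then none else F.label v⟩

/-- `Fu` is the agreement forest underlying the EAF `F`: delete the
φ-nodes and suppress the resulting degree-2 vertices. -/
def UnderlyingAF {X : Type} (F Fu : PGraph (Option X)) : Prop :=
  ∃ F', Yields (removePhi F) F' ∧ PGraph.Isom F' Fu

/-- A maximal EAF: an EAF whose underlying agreement forest is a maximal
agreement forest. -/
def IsMEAF {X : Type} (F : PGraph (Option X)) (T1 T2 : PGraph X) : Prop :=
  IsEAF F T1 T2 ∧
  ∃ Fu, UnderlyingAF F Fu ∧ IsMaximalAF Fu (toPhi T1) (toPhi T2)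

/-! ### Socket forests -/

/-- A socket forest: a forest with a distinguished set of socket nodes. -/
structure SocketForest (L : Type) where
  graph : PGraph L
  sockets : Finset ℕ

def SocketForest.WF (S : SocketForest L) : Prop :=
  S.graph.WF ∧ S.graph.Acyclic ∧ S.sockets ⊆ S.graph.verts ∧
  ∀ v ∈ S.sockets, S.graph.label v = none

/-- A connection set: a list of connections, each joining two sockets;
connections keep their identity (their position in the list). -/
abbrev ConnSet := List (ℕ × ℕ)

def ConnOK (S : SocketForest L) (C : ConnSet) : Prop :=
  ∀ c ∈ C, c.1 ∈ S.sockets ∧ c.2 ∈ S.sockets ∧ c.1 ≠ c.2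

/-- Add the connections of `C` to the socket forest `S`. -/
def realize (S : SocketForest L) (C : ConnSet) : PGraph L :=
  ⟨S.graph.verts, S.graph.edges ∪ (C.map (fun c => s(c.1, c.2))).toFinset,
   S.graph.label⟩

/-- Resolve a multifurcation: split an unlabeled vertex of degree at
least 4, separating two of its incident edges onto a fresh neighbour. -/
def ResolveStep (G G' : PGraph L) : Prop :=
  ∃ v x y w : ℕ, v ∈ G.verts ∧ w ∉ G.verts ∧ 4 ≤ G.degree v ∧
    G.label v = none ∧ G.label w = none ∧
    x ≠ y ∧ x ≠ v ∧ y ≠ v ∧ s(v, x) ∈ G.edges ∧ s(v, y) ∈ G.edges ∧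
    G'.verts = insert w G.verts ∧
    G'.edges = (G.edges \ {s(v, x), s(v, y)}) ∪ {s(w, x), s(w, y), s(v, w)} ∧
    G'.label = G.label

/-- The socket forest `S`, with the connection set `C` added, realizes
`T` after resolving multifurcations and suppressing unconnected
sockets. -/
def PermitsVia (S : SocketForest L) (C : ConnSet) (T : PGraph L) : Prop :=
  ConnOK S C ∧ ∃ G1 G2, Relation.ReflTransGen ResolveStep (realize S C) G1 ∧
    Yields G1 G2 ∧ PGraph.Isom G2 T

/-- The socket forest `S` permits `T`. -/
def Permits (S : SocketForest L) (T : PGraph L) : Prop := ∃ C, PermitsVia S C T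

/-- A socket agreement forest of `T1` and `T2`. -/
def IsSAF (S : SocketForest L) (T1 T2 : PGraph L) : Prop :=
  S.WF ∧ Permits S T1 ∧ Permits S T2

/-- The forest underlying a socket forest: suppress the (unconnected)
sockets. -/
def UnderlyingForestOf (S : SocketForest L) (F : PGraph L) : Prop :=
  ∃ F', Yields S.graph F' ∧ PGraph.Isom F' F

/-! ### Dead trees and φ-node assignments -/

/-- Two sockets are adjacent in the connection graph of `C`. -/
def connAdj (C : ConnSet) (x y : ℕ) : Prop := (x, y) ∈ C ∨ (y, x) ∈ C

/-- Reachability in the connection graph of `C`; its nontrivial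
connected components correspond to the dead trees of the realized
tree. -/
def connReach (C : ConnSet) : ℕ → ℕ → Prop := Relation.ReflTransGen (connAdj C)

def socketUsed (C : ConnSet) (x : ℕ) : Prop := ∃ c ∈ C, c.1 = x ∨ c.2 = x

/-- The φ-node assignment `A` satisfies every dead tree of the
configuration `C`: each connected component of the connection graph is
adjacent to some socket not assigned a φ-node. -/
def SatisfiesDeadTrees (C : ConnSet) (A : Finset ℕ) : Prop :=
  ∀ x : ℕ, socketUsed C x → ∃ y : ℕ, connReach C x y ∧ y ∉ A

/-- `G` is the graph obtained from the socket forest `S` by attaching a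
fresh φ-leaf to each socket in `A`. -/
def AttachPhis {X : Type} (S : SocketForest (Option X)) (A : Finset ℕ)
    (G : PGraph (Option X)) : Prop :=
  ∃ φf : ℕ → ℕ, Set.InjOn φf ↑A ∧ (∀ a ∈ A, φf a ∉ S.graph.verts) ∧
    G.verts = S.graph.verts ∪ A.image φf ∧
    G.edges = S.graph.edges ∪ A.image (fun a => s(a, φf a)) ∧
    (∀ v ∈ S.graph.verts, G.label v = S.graph.label v) ∧
    ∀ a ∈ A, G.label (φf a) = some none

/-- The assignment of φ-nodes to the sockets `A` of `S` yields an
endpoint agreement forest of `T1` and `T2`. -/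
def AssignmentYieldsEAF {X : Type} (S : SocketForest (Option X)) (A : Finset ℕ)
    (T1 T2 : PGraph X) : Prop :=
  ∃ G F, AttachPhis S A G ∧ Yields G F ∧ IsEAF F T1 T2

/-- The candidate φ-node sockets: the sockets connected to an edge in
both the `T1` configuration `C1` and the `T2` configuration `C2`. -/
def candidateSockets (S : SocketForest L) (C1 C2 : ConnSet) : Finset ℕ :=
  S.sockets.filter (fun x => socketUsed C1 x ∧ socketUsed C2 x)




open Relation Finset

/-- edge relation of an edge finset -/
def erel (A : Finset (Sym2 ℕ)) (x y : ℕ) : Prop := s(x, y) ∈ A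

lemma erel_symm {A : Finset (Sym2 ℕ)} {x y : ℕ} (h : erel A x y) : erel A y x := by
  unfold erel at *; rwa [Sym2.eq_swap]

lemma rtg_symm {A : Finset (Sym2 ℕ)} {x y : ℕ}
    (h : ReflTransGen (erel A) x y) : ReflTransGen (erel A) y x := by
  induction h with
  | refl => exact .refl
  | tail _ h2 ih => exact ReflTransGen.trans (ReflTransGen.single (erel_symm h2)) ih

lemma rtg_mono {A B : Finset (Sym2 ℕ)} (hAB : A ⊆ B) {x y : ℕ}
    (h : ReflTransGen (erel A) x y) : ReflTransGen (erel B) x y :=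
  ReflTransGen.mono (fun _ _ hr => hAB hr) _ _ h

lemma reach_eq (G : PGraph L) : G.Reach = ReflTransGen (erel G.edges) := rfl

lemma reachAvoiding_eq (G : PGraph L) (E : Finset (Sym2 ℕ)) :
    G.ReachAvoiding E = ReflTransGen (erel (G.edges \ E)) := rfl

lemma rtg_eq_of_no_edge {A : Finset (Sym2 ℕ)} {v x : ℕ}
    (hv : ∀ e ∈ A, v ∉ e) (h : ReflTransGen (erel A) v x) : x = v := by
  induction h with
  | refl => rfl
  | tail _ h2 ih => subst ih; exact absurd (Sym2.mem_mk_left _ _) (hv _ h2)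

lemma rtg_exists_edge {A : Finset (Sym2 ℕ)} {x y : ℕ}
    (h : ReflTransGen (erel A) x y) (hxy : x ≠ y) : ∃ e ∈ A, y ∈ e := by
  induction h with
  | refl => exact absurd rfl hxy
  | tail _ h2 _ => exact ⟨_, h2, Sym2.mem_mk_right _ _⟩

/-- Excision of pendant vertices outside `V`: if every `A`-edge with both ends in
`V` is in `B`, and every `A`-edge touching a vertex outside `V` is the unique
`A`-edge at that vertex and joins it to a vertex of `V`, then `A`-paths between
`V`-vertices yield `B`-paths. -/
lemma excise_leaves {A B : Finset (Sym2 ℕ)} {V : Set ℕ}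
    (hin : ∀ e ∈ A, (∀ u ∈ e, u ∈ V) → e ∈ B)
    (hleaf : ∀ e ∈ A, ∀ u ∈ e, u ∉ V → (∃ k, k ∈ V ∧ e = s(k, u)) ∧
      (∀ e' ∈ A, u ∈ e' → e' = e))
    {x : ℕ} (hx : x ∈ V) :
    ∀ {y : ℕ}, ReflTransGen (erel A) x y →
      (y ∈ V → ReflTransGen (erel B) x y) ∧
      (y ∉ V → ∀ k, s(k, y) ∈ A → ReflTransGen (erel B) x k) := by
  intro y h
  induction h with
  | refl =>
    refine ⟨fun _ => .refl, fun hy _ _ => absurd hx hy⟩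
  | @tail z y h1 h2 ih =>
    by_cases hzV : z ∈ V
    · by_cases hyV : y ∈ V
      · refine ⟨fun _ => ?_, fun hy => absurd hyV hy⟩
        by_cases hzy : z = y
        · exact hzy ▸ ih.1 hzV
        · refine (ih.1 hzV).tail ?_
          exact hin _ h2 (by intro u hu; rcases Sym2.mem_iff.1 hu with rfl | rfl <;> assumption)
      · refine ⟨fun hy => absurd hy hyV, fun _ k hk => ?_⟩
        have huniq := (hleaf _ h2 y (Sym2.mem_mk_right z y) hyV).2
        have := huniq _ hk (Sym2.mem_mk_right k y)
        have hkz : k = z := by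
          rcases Sym2.eq_iff.1 this with ⟨rfl, _⟩ | ⟨h3, h4⟩
          · rfl
          · exact absurd (h4.symm ▸ hzV : y ∈ V) hyV
        exact hkz ▸ ih.1 hzV
    · -- z ∉ V : edge s(z,y) has z outside V, so it is the unique edge at z, joining z to V
      obtain ⟨⟨k, hkV, hke⟩, _⟩ := hleaf _ h2 z (Sym2.mem_mk_left z y) hzV
      have hyk : y = k := by
        rcases Sym2.eq_iff.1 hke with ⟨h3, h4⟩ | ⟨h3, h4⟩
        · exact absurd (h3.symm ▸ hkV : z ∈ V) hzV
        · exact h4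
      -- then y = k ∈ V
      have hyV : y ∈ V := hyk ▸ hkV
      refine ⟨fun _ => ?_, fun hy => absurd hyV hy⟩
      exact ih.2 hzV y (by rwa [Sym2.eq_swap])

/-- Excision of a degree-2 vertex `v` with neighbours `a`, `b`. -/
lemma excise_deg2 {A B : Finset (Sym2 ℕ)} {v a b : ℕ}
    (hv : ∀ e ∈ A, v ∈ e → e = s(v, a) ∨ e = s(v, b))
    (hav : a ≠ v) (hbv : b ≠ v)
    (hB1 : ∀ e ∈ A, v ∉ e → e ∈ B) (hB2 : s(a, b) ∈ B)
    {x : ℕ} (hx : x ≠ v) :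
    ∀ {y : ℕ}, ReflTransGen (erel A) x y →
      (y ≠ v → ReflTransGen (erel B) x y) ∧
      (y = v → ReflTransGen (erel B) x a ∧ ReflTransGen (erel B) x b) := by
  intro y h
  induction h with
  | refl => exact ⟨fun _ => .refl, fun hy => absurd hy hx⟩
  | @tail z y h1 h2 ih =>
    by_cases hzv : z = v
    · rw [hzv] at h2
      by_cases hyv : y = v
      · exact ⟨fun hy => absurd hyv hy, fun _ => ih.2 hzv⟩
      · refine ⟨fun _ => ?_, fun hy => absurd hy hyv⟩
        rcases hv _ h2 (Sym2.mem_mk_left _ _) with he | he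
        · rcases Sym2.eq_iff.1 he with ⟨_, rfl⟩ | ⟨h3, h4⟩
          · exact (ih.2 hzv).1
          · exact absurd h4 hyv
        · rcases Sym2.eq_iff.1 he with ⟨_, rfl⟩ | ⟨h3, h4⟩
          · exact (ih.2 hzv).2
          · exact absurd h4 hyv
    · by_cases hyv : y = v
      · subst hyv
        refine ⟨fun hy => absurd rfl hy, fun _ => ?_⟩
        have hz := ih.1 hzv
        rcases hv _ h2 (Sym2.mem_mk_right _ _) with he | he
        · rcases Sym2.eq_iff.1 he with ⟨h3, _⟩ | ⟨h3, h4⟩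
          · exact absurd h3 hzv
          · subst h3; exact ⟨hz, hz.tail hB2⟩
        · rcases Sym2.eq_iff.1 he with ⟨h3, _⟩ | ⟨h3, h4⟩
          · exact absurd h3 hzv
          · subst h3; exact ⟨hz.tail (erel_symm hB2), hz⟩
      · refine ⟨fun _ => (ih.1 hzv).tail ?_, fun hy => absurd hy hyv⟩
        refine hB1 _ h2 ?_
        intro hmem
        rcases Sym2.mem_iff.1 hmem with h3 | h3
        · exact hzv h3.symm
        · exact hyv h3.symm

/-- Lift a path using edge `s(a,b)` back through `v`. -/
lemma lift_deg2 {A B : Finset (Sym2 ℕ)} {v a b : ℕ}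
    (hsub : ∀ e ∈ B, e = s(a, b) ∨ e ∈ A)
    (hva : s(v, a) ∈ A) (hvb : s(v, b) ∈ A)
    {x y : ℕ} (h : ReflTransGen (erel B) x y) : ReflTransGen (erel A) x y := by
  induction h with
  | refl => exact .refl
  | @tail z y h1 h2 ih =>
    rcases hsub _ h2 with he | he
    · rcases Sym2.eq_iff.1 he with ⟨rfl, rfl⟩ | ⟨rfl, rfl⟩
      · exact (ih.tail (erel_symm hva)).tail hvb
      · exact (ih.tail (erel_symm hvb)).tail hva
    · exact ih.tail he

/-- An acyclic graph on `V` has at most `|V| - 1` edges, with equality iff connected. -/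
lemma forest_card (A : Finset (Sym2 ℕ)) : ∀ (V : Finset ℕ),
    (∀ e ∈ A, ¬e.IsDiag ∧ ∀ u ∈ e, u ∈ V) →
    (∀ u v, s(u, v) ∈ A → ¬ ReflTransGen (erel (A \ {s(u, v)})) u v) →
    V.Nonempty →
    (A.card + 1 ≤ V.card) ∧
      ((∀ u ∈ V, ∀ v ∈ V, ReflTransGen (erel A) u v) → A.card + 1 = V.card) := by
  induction A using Finset.strongInduction with
  | _ A IH =>
  intro V hwf hacy hV
  rcases A.eq_empty_or_nonempty with rfl | ⟨e, he⟩
  · refine ⟨by simpa using hV.card_pos, fun hconn => ?_⟩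
    obtain ⟨x, hx⟩ := hV
    have : V = {x} := by
      apply Finset.eq_singleton_iff_unique_mem.2
      refine ⟨hx, fun y hy => ?_⟩
      have := hconn y hy x hx
      clear hx
      induction this with
      | refl => rfl
      | tail _ h2 _ => simp [erel] at h2
    simp [this]
  · obtain ⟨u, v, rfl⟩ : ∃ u v, e = s(u, v) := Sym2.ind (fun x y => ⟨x, y, rfl⟩) e
    have huv : u ≠ v := fun h => (hwf _ he).1 (by simp [h])
    have huV : u ∈ V := (hwf _ he).2 u (Sym2.mem_mk_left _ _)
    have hvV : v ∈ V := (hwf _ he).2 v (Sym2.mem_mk_right _ _)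
    set A' := A.erase s(u, v) with hA'
    have hA'sub : A' ⊆ A := Finset.erase_subset _ _
    have hA'eq : A' = A \ {s(u, v)} := by rw [hA', Finset.erase_eq]
    set VA := V.filter (fun x => ReflTransGen (erel A') u x) with hVA
    set VB := V.filter (fun x => ¬ ReflTransGen (erel A') u x) with hVB
    have huVA : u ∈ VA := Finset.mem_filter.2 ⟨huV, .refl⟩
    have hvVB : v ∈ VB := Finset.mem_filter.2 ⟨hvV, by rw [hA'eq]; exact hacy u v he⟩
    have hedge : ∀ f ∈ A', (∀ w ∈ f, w ∈ VA) ∨ (∀ w ∈ f, w ∈ VB) := by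
      intro f hf
      obtain ⟨x, y, rfl⟩ : ∃ x y, f = s(x, y) := Sym2.ind (fun x y => ⟨x, y, rfl⟩) f
      have hxV : x ∈ V := (hwf _ (hA'sub hf)).2 x (Sym2.mem_mk_left _ _)
      have hyV : y ∈ V := (hwf _ (hA'sub hf)).2 y (Sym2.mem_mk_right _ _)
      by_cases hx : ReflTransGen (erel A') u x
      · left
        intro w hw
        rcases Sym2.mem_iff.1 hw with rfl | rfl
        · exact Finset.mem_filter.2 ⟨hxV, hx⟩
        · exact Finset.mem_filter.2 ⟨hyV, hx.tail hf⟩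
      · right
        have hy : ¬ ReflTransGen (erel A') u y := fun hy => hx (hy.tail (erel_symm hf))
        intro w hw
        rcases Sym2.mem_iff.1 hw with rfl | rfl
        · exact Finset.mem_filter.2 ⟨hxV, hx⟩
        · exact Finset.mem_filter.2 ⟨hyV, hy⟩
    set AIn := A'.filter (fun f => ∀ w ∈ f, w ∈ VA) with hAIn
    set AOut := A'.filter (fun f => ¬ ∀ w ∈ f, w ∈ VA) with hAOut
    have hAInA' : AIn ⊆ A' := Finset.filter_subset _ _
    have hAOutA' : AOut ⊆ A' := Finset.filter_subset _ _
    have hAOutB : ∀ f ∈ AOut, ∀ w ∈ f, w ∈ VB := by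
      intro f hf
      rcases hedge f (hAOutA' hf) with h | h
      · exact absurd h (Finset.mem_filter.1 hf).2
      · exact h
    have hdisjV : ∀ w, w ∈ VA → w ∈ VB → False := by
      intro w h1 h2; exact (Finset.mem_filter.1 h2).2 (Finset.mem_filter.1 h1).2
    have hA'ssub : A' ⊂ A := Finset.erase_ssubset he
    have hVcard : VA.card + VB.card = V.card := Finset.card_filter_add_card_filter_not _
    have hAcard : AIn.card + AOut.card = A'.card := Finset.card_filter_add_card_filter_not _
    have hA'card : A'.card + 1 = A.card := Finset.card_erase_add_one he
    -- acyclicity hypotheses descend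
    have hacyIn : ∀ x y, s(x, y) ∈ AIn → ¬ ReflTransGen (erel (AIn \ {s(x, y)})) x y := by
      intro x y hxy hr
      exact hacy x y (hA'sub (hAInA' hxy))
        (rtg_mono (fun g hg => by
          simp only [Finset.mem_sdiff, Finset.mem_singleton] at hg ⊢
          exact ⟨hA'sub (hAInA' hg.1), hg.2⟩) hr)
    have hacyOut : ∀ x y, s(x, y) ∈ AOut → ¬ ReflTransGen (erel (AOut \ {s(x, y)})) x y := by
      intro x y hxy hr
      exact hacy x y (hA'sub (hAOutA' hxy))
        (rtg_mono (fun g hg => by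
          simp only [Finset.mem_sdiff, Finset.mem_singleton] at hg ⊢
          exact ⟨hA'sub (hAOutA' hg.1), hg.2⟩) hr)
    have hwfIn : ∀ f ∈ AIn, ¬f.IsDiag ∧ ∀ w ∈ f, w ∈ VA := by
      intro f hf
      exact ⟨(hwf _ (hA'sub (hAInA' hf))).1, (Finset.mem_filter.1 hf).2⟩
    have hwfOut : ∀ f ∈ AOut, ¬f.IsDiag ∧ ∀ w ∈ f, w ∈ VB := by
      intro f hf
      exact ⟨(hwf _ (hA'sub (hAOutA' hf))).1, hAOutB f hf⟩
    have IHIn := IH AIn (lt_of_le_of_lt hAInA' hA'ssub) VA hwfIn hacyIn ⟨u, huVA⟩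
    have IHOut := IH AOut (lt_of_le_of_lt hAOutA' hA'ssub) VB hwfOut hacyOut ⟨v, hvVB⟩
    constructor
    · omega
    · intro hconn
      -- paths within A' from u stay in VA and use AIn edges
      have hInPath : ∀ x, ReflTransGen (erel A') u x → ReflTransGen (erel AIn) u x := by
        intro x hx
        induction hx with
        | refl => exact .refl
        | @tail z w h1 h2 ih =>
          have hzVA : z ∈ VA :=
            Finset.mem_filter.2 ⟨(hwf _ (hA'sub h2)).2 z (Sym2.mem_mk_left _ _), h1⟩
          have : s(z, w) ∈ AIn := by
            rcases hedge _ h2 with h | h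
            · exact Finset.mem_filter.2 ⟨h2, h⟩
            · exact absurd (h z (Sym2.mem_mk_left _ _)) (fun hzB => hdisjV z hzVA hzB)
          exact ih.tail this
      -- sided decomposition of arbitrary A-paths from v
      have hSided : ∀ q, ReflTransGen (erel A) v q →
          (q ∈ VA → ReflTransGen (erel AIn) u q) ∧
          (q ∈ VB → ReflTransGen (erel AOut) v q) := by
        intro q hq
        induction hq with
        | refl =>
          exact ⟨fun h => absurd h (fun h => hdisjV v h hvVB), fun _ => .refl⟩
        | @tail z w h1 h2 ih =>
          by_cases hfe : s(z, w) = s(u, v)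
          · rcases Sym2.eq_iff.1 hfe with ⟨rfl, rfl⟩ | ⟨rfl, rfl⟩
            · exact ⟨fun h => absurd h (fun h => hdisjV w h hvVB), fun _ => .refl⟩
            · exact ⟨fun _ => .refl, fun h => absurd h (fun h => hdisjV _ huVA h)⟩
          · have hfA' : s(z, w) ∈ A' := Finset.mem_erase.2 ⟨hfe, h2⟩
            rcases hedge _ hfA' with h | h
            · have hzVA := h z (Sym2.mem_mk_left _ _)
              have hwVA := h w (Sym2.mem_mk_right _ _)
              refine ⟨fun _ => (ih.1 hzVA).tail (Finset.mem_filter.2 ⟨hfA', h⟩),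
                fun hw => absurd hw (fun hw => hdisjV w hwVA hw)⟩
            · have hzVB := h z (Sym2.mem_mk_left _ _)
              have hwVB := h w (Sym2.mem_mk_right _ _)
              have hfAOut : s(z, w) ∈ AOut := Finset.mem_filter.2
                ⟨hfA', fun hall => hdisjV z (hall z (Sym2.mem_mk_left _ _)) hzVB⟩
              refine ⟨fun hw => absurd hw (fun hw => hdisjV w hw hwVB),
                fun _ => (ih.2 hzVB).tail hfAOut⟩
      have hconnIn : ∀ x ∈ VA, ∀ y ∈ VA, ReflTransGen (erel AIn) x y := by
        intro x hx y hy
        exact (rtg_symm (hInPath x (Finset.mem_filter.1 hx).2)).trans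
          (hInPath y (Finset.mem_filter.1 hy).2)
      have hconnOut : ∀ x ∈ VB, ∀ y ∈ VB, ReflTransGen (erel AOut) x y := by
        intro x hx y hy
        have h1 := (hSided x (hconn v hvV x (Finset.mem_filter.1 hx).1)).2 hx
        have h2 := (hSided y (hconn v hvV y (Finset.mem_filter.1 hy).1)).2 hy
        exact (rtg_symm h1).trans h2
      have e1 := IHIn.2 hconnIn
      have e2 := IHOut.2 hconnOut
      omega

variable {L : Type}

/-- integer weight -/
def Wt {X : Type} (G : PGraph (Option X)) : ℤ :=
  2 * ((G.verts.card : ℤ) - G.edges.card - 1) - phiCount G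

/-- connected component of `v` -/
def comp (G : PGraph L) (v : ℕ) : Finset ℕ :=
  G.verts.filter (fun w => ReflTransGen (erel G.edges) v w)

/-- the all-unlabeled components -/
def unl (G : PGraph L) : Finset (Finset ℕ) :=
  (G.verts.filter (fun v => ∀ w ∈ comp G v, G.label w = none)).image (comp G)

lemma mem_comp {G : PGraph L} {v w : ℕ} :
    w ∈ comp G v ↔ w ∈ G.verts ∧ ReflTransGen (erel G.edges) v w := Finset.mem_filter

lemma comp_self {G : PGraph L} {v : ℕ} (h : v ∈ G.verts) : v ∈ comp G v :=
  mem_comp.2 ⟨h, .refl⟩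

lemma comp_eq_of_reach {G : PGraph L} {u v : ℕ}
    (h : ReflTransGen (erel G.edges) v u) : comp G u = comp G v := by
  apply Finset.filter_congr
  intro w _
  exact ⟨fun hw => h.trans hw, fun hw => (rtg_symm h).trans hw⟩

lemma mem_unl {G : PGraph L} {K : Finset ℕ} :
    K ∈ unl G ↔ ∃ v, (v ∈ G.verts ∧ ∀ w ∈ comp G v, G.label w = none) ∧ K = comp G v := by
  simp only [unl, Finset.mem_image, Finset.mem_filter]
  constructor
  · rintro ⟨v, hv, rfl⟩; exact ⟨v, hv, rfl⟩
  · rintro ⟨v, hv, rfl⟩; exact ⟨v, hv, rfl⟩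

lemma unl_spec {G : PGraph L} {K : Finset ℕ} (hK : K ∈ unl G) {u : ℕ} (hu : u ∈ K) :
    K = comp G u ∧ ∀ w ∈ K, G.label w = none := by
  obtain ⟨v, ⟨hv, hlab⟩, rfl⟩ := mem_unl.1 hK
  exact ⟨(comp_eq_of_reach (mem_comp.1 hu).2).symm, hlab⟩

lemma unl_subset {G : PGraph L} {K : Finset ℕ} (hK : K ∈ unl G) : K ⊆ G.verts := by
  obtain ⟨v, _, rfl⟩ := mem_unl.1 hK
  exact Finset.filter_subset _ _

lemma unl_nonempty {G : PGraph L} {K : Finset ℕ} (hK : K ∈ unl G) : K.Nonempty := by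
  obtain ⟨v, ⟨hv, _⟩, rfl⟩ := mem_unl.1 hK
  exact ⟨v, comp_self hv⟩

/-- generic injection lemma between all-unlabeled components across a graph operation -/
lemma unl_card_le {G G' : PGraph L}
    (hvsub : G'.verts ⊆ G.verts)
    (hlab : ∀ w, G'.label w = G.label w)
    (hfwd : ∀ x ∈ G'.verts, ∀ y ∈ G'.verts, ReflTransGen (erel G.edges) x y →
      ReflTransGen (erel G'.edges) x y)
    (hrem : ∀ w ∈ G.verts, w ∉ G'.verts → G.label w = none) :
    ((unl G').card ≤ (unl G).card) ∧
    (∀ K₀ ∈ unl G, (∀ x ∈ K₀, x ∉ G'.verts) → (unl G').card + 1 ≤ (unl G).card) := by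
  classical
  have hmap : ∀ K ∈ unl G', ∀ u ∈ K, comp G u ∈ unl G ∧ u ∈ comp G u := by
    intro K hK u hu
    have hspec := unl_spec hK hu
    have huv' : u ∈ G'.verts := unl_subset hK hu
    have huv : u ∈ G.verts := hvsub huv'
    refine ⟨mem_unl.2 ⟨u, ⟨huv, ?_⟩, rfl⟩, comp_self huv⟩
    intro w hw
    obtain ⟨hwG, hr⟩ := mem_comp.1 hw
    by_cases hw' : w ∈ G'.verts
    · have : w ∈ comp G' u := mem_comp.2 ⟨hw', hfwd u huv' w hw' hr⟩
      have hwK : w ∈ K := by rw [hspec.1]; exact this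
      exact (hlab w).symm.trans (hspec.2 w hwK)
    · exact hrem w hwG hw'
  set f : Finset ℕ → Finset ℕ := fun K => if h : K.Nonempty then comp G h.choose else ∅ with hf
  have hfval : ∀ K ∈ unl G', f K ∈ unl G ∧ ∃ u ∈ K, f K = comp G u ∧ u ∈ G'.verts := by
    intro K hK
    have hne := unl_nonempty hK
    have hchoose := hne.choose_spec
    have := hmap K hK _ hchoose
    refine ⟨by simp only [hf, dif_pos hne]; exact this.1, hne.choose, hchoose, ?_, ?_⟩
    · simp only [hf, dif_pos hne]
    · exact unl_subset hK hchoose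
  have hinj : ∀ K ∈ unl G', ∀ K' ∈ unl G', f K = f K' → K = K' := by
    intro K hK K' hK' heq
    obtain ⟨_, u, hu, hfu, hu'⟩ := hfval K hK
    obtain ⟨_, u', hu2, hfu', hu2'⟩ := hfval K' hK'
    have : u' ∈ comp G u := by
      rw [← hfu, heq, hfu']
      exact comp_self (hvsub hu2')
    have hr : ReflTransGen (erel G'.edges) u u' := hfwd u hu' u' hu2' (mem_comp.1 this).2
    have e1 := (unl_spec hK hu).1
    have e2 := (unl_spec hK' hu2).1
    rw [e1, e2]
    exact comp_eq_of_reach (G := G') (rtg_symm hr)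
  constructor
  · exact Finset.card_le_card_of_injOn f (fun K hK => (hfval K hK).1) (fun K hK K' hK' h => hinj K (by simpa using hK) K' (by simpa using hK') h)
  · intro K₀ hK₀ hK₀disj
    have : (unl G').card ≤ ((unl G).erase K₀).card := by
      apply Finset.card_le_card_of_injOn f
      · intro K hK
        obtain ⟨hmem, u, hu, hfu, hu'⟩ := hfval K hK
        refine Finset.mem_erase.2 ⟨?_, hmem⟩
        intro hKeq
        have : u ∈ K₀ := by rw [← hKeq, hfu]; exact comp_self (hvsub hu')
        exact hK₀disj u this hu'
      · intro K hK K' hK' h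
        exact hinj K (by simpa using hK) K' (by simpa using hK') h
    have := Finset.card_erase_add_one hK₀
    omega

lemma phiCount_erase {X : Type} {G G' : PGraph (Option X)} {v : ℕ}
    (hverts : G'.verts = G.verts.erase v) (hlabel : G'.label = G.label)
    (hvnone : G.label v = none) : phiCount G' = phiCount G := by
  unfold phiCount
  rw [hlabel, hverts, Finset.filter_erase, Finset.erase_eq_of_notMem]
  simp [hvnone]

lemma suppress_key {X : Type} {G G' : PGraph (Option X)} (h : SuppressStep G G')
    (hwf : G.WF) (hacy : G.Acyclic) :
    G'.WF ∧ G'.Acyclic ∧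
      Wt G + 2 * ((unl G').card : ℤ) ≤ Wt G' + 2 * ((unl G).card : ℤ) := by
  classical
  rcases h with ⟨v, a, b, hv, hvnone, hab, hav, hbv, hflt, hverts, hedges, hlabel⟩ |
    ⟨v, hv, hvnone, hdeg, hverts, hedges, hlabel⟩
  · -- degree-2 suppression
    have hmemflt : ∀ e, e ∈ G.edges.filter (fun e => v ∈ e) ↔ (e ∈ G.edges ∧ v ∈ e) := by
      intro e; exact Finset.mem_filter
    have hva : s(v, a) ∈ G.edges := by
      have : s(v, a) ∈ G.edges.filter (fun e => v ∈ e) := by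
        rw [hflt]; simp
      exact (Finset.mem_filter.1 this).1
    have hvb : s(v, b) ∈ G.edges := by
      have : s(v, b) ∈ G.edges.filter (fun e => v ∈ e) := by
        rw [hflt]; simp
      exact (Finset.mem_filter.1 this).1
    have hAatv : ∀ e ∈ G.edges, v ∈ e → e = s(v, a) ∨ e = s(v, b) := by
      intro e he hve
      have : e ∈ G.edges.filter (fun e => v ∈ e) := Finset.mem_filter.2 ⟨he, hve⟩
      rw [hflt] at this
      simpa using this
    have hvab : v ∉ s(a, b) := by
      simp only [Sym2.mem_iff]
      push_neg
      exact ⟨fun h => hav h.symm, fun h => hbv h.symm⟩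
    have habE : s(a, b) ∉ G.edges := by
      intro hmem
      apply hacy a b hmem
      have h1 : erel (G.edges \ {s(a, b)}) a v := by
        refine Finset.mem_sdiff.2 ⟨by rwa [Sym2.eq_swap], ?_⟩
        simp only [Finset.mem_singleton]
        intro he
        rcases Sym2.eq_iff.1 he with ⟨h1, h2⟩ | ⟨h1, h2⟩
        · exact hbv h2.symm
        · exact hab h1
      have h2 : erel (G.edges \ {s(a, b)}) v b := by
        refine Finset.mem_sdiff.2 ⟨hvb, ?_⟩
        simp only [Finset.mem_singleton]
        intro he
        rcases Sym2.eq_iff.1 he with ⟨h1, h2⟩ | ⟨h1, h2⟩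
        · exact hav h1.symm
        · exact hbv h1.symm
      exact (ReflTransGen.single h1).tail h2
    have hvavb : s(v, a) ≠ s(v, b) := by
      intro he
      rcases Sym2.eq_iff.1 he with ⟨h1, h2⟩ | ⟨h1, h2⟩
      · exact hab h2
      · exact hav h2
    have hpair : ({s(v, a), s(v, b)} : Finset (Sym2 ℕ)) ⊆ G.edges := by
      intro e he
      rcases Finset.mem_insert.1 he with rfl | he
      · exact hva
      · rw [Finset.mem_singleton.1 he]; exact hvb
    have habsd : s(a, b) ∉ G.edges \ {s(v, a), s(v, b)} := fun hmem =>
      habE (Finset.mem_sdiff.1 hmem).1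
    have hEcard : G'.edges.card + 1 = G.edges.card := by
      rw [hedges, Finset.card_union_of_disjoint (by simp [habsd]),
        Finset.card_sdiff_of_subset hpair]
      have h2 : ({s(v, a), s(v, b)} : Finset (Sym2 ℕ)).card = 2 := by
        rw [Finset.card_insert_of_notMem (by simpa using hvavb)]; simp
      have hle : 2 ≤ G.edges.card := h2 ▸ Finset.card_le_card hpair
      simp only [Finset.card_singleton, h2]
      omega
    have hVcard : G'.verts.card + 1 = G.verts.card := by
      rw [hverts, Finset.card_erase_of_mem hv]
      have := Finset.card_pos.2 ⟨v, hv⟩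
      omega
    have hq : phiCount G' = phiCount G := phiCount_erase hverts hlabel hvnone
    have hB1 : ∀ e ∈ G.edges, v ∉ e → e ∈ G'.edges := by
      intro e he hve
      rw [hedges]
      apply Finset.mem_union_left
      refine Finset.mem_sdiff.2 ⟨he, ?_⟩
      intro hmem
      rcases Finset.mem_insert.1 hmem with rfl | hmem
      · exact hve (Sym2.mem_mk_left _ _)
      · rw [Finset.mem_singleton.1 hmem] at hve
        exact hve (Sym2.mem_mk_left _ _)
    have hB2 : s(a, b) ∈ G'.edges := by rw [hedges]; simp
    have hwf' : G'.WF := by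
      refine ⟨?_, ?_⟩
      · intro e he
        rw [hedges] at he
        rcases Finset.mem_union.1 he with he | he
        · obtain ⟨heE, hemem⟩ := Finset.mem_sdiff.1 he
          refine ⟨(hwf.1 e heE).1, fun w hw => ?_⟩
          rw [hverts]
          refine Finset.mem_erase.2 ⟨?_, (hwf.1 e heE).2 w hw⟩
          rintro rfl
          rcases hAatv e heE hw with rfl | rfl <;> simp at hemem
        · rw [Finset.mem_singleton.1 he]
          refine ⟨by simpa using hab, fun w hw => ?_⟩
          rw [hverts]
          rcases Sym2.mem_iff.1 hw with rfl | rfl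
          · exact Finset.mem_erase.2 ⟨hav, (hwf.1 _ hva).2 w (Sym2.mem_mk_right _ _)⟩
          · exact Finset.mem_erase.2 ⟨hbv, (hwf.1 _ hvb).2 w (Sym2.mem_mk_right _ _)⟩
      · intro w hw
        rw [hlabel] at hw
        rw [hverts]
        refine Finset.mem_erase.2 ⟨?_, hwf.2 w hw⟩
        rintro rfl
        rw [hvnone] at hw
        simp at hw
    have hacy' : G'.Acyclic := by
      intro x y hxy hr
      rw [reachAvoiding_eq] at hr
      by_cases hcase : s(x, y) = s(a, b)
      · have hsub : G'.edges \ {s(x, y)} ⊆ G.edges \ {s(v, a), s(v, b)} := by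
          intro e he
          obtain ⟨heB, hene⟩ := Finset.mem_sdiff.1 he
          rw [hedges] at heB
          rcases Finset.mem_union.1 heB with heB | heB
          · exact heB
          · rw [Finset.mem_singleton.1 heB] at hene ⊢
            rw [hcase] at hene
            simp at hene
        have hr' := rtg_mono hsub hr
        have hvbma : s(v, b) ∈ G.edges \ {s(v, a)} := by
          refine Finset.mem_sdiff.2 ⟨hvb, ?_⟩
          simp only [Finset.mem_singleton]
          exact fun h => hvavb h.symm
        have hmono : G.edges \ {s(v, a), s(v, b)} ⊆ G.edges \ {s(v, a)} := by
          intro e he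
          obtain ⟨h1, h2⟩ := Finset.mem_sdiff.1 he
          simp only [Finset.mem_insert, Finset.mem_singleton] at h2
          push_neg at h2
          exact Finset.mem_sdiff.2 ⟨h1, by simpa using h2.1⟩
        have : ReflTransGen (erel (G.edges \ {s(v, a)})) b a := by
          rcases Sym2.eq_iff.1 hcase with ⟨rfl, rfl⟩ | ⟨rfl, rfl⟩
          · exact rtg_symm (rtg_mono hmono hr')
          · exact rtg_mono hmono hr'
        exact hacy v a hva ((ReflTransGen.single hvbma).trans this)
      · have hxyE : s(x, y) ∈ G.edges \ {s(v, a), s(v, b)} := by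
          have : s(x, y) ∈ G'.edges := hxy
          rw [hedges] at this
          rcases Finset.mem_union.1 this with h | h
          · exact h
          · exact absurd (Finset.mem_singleton.1 h) hcase
        have hvnotxy : v ∉ s(x, y) := by
          intro hmem
          rcases hAatv _ (Finset.mem_sdiff.1 hxyE).1 hmem with h | h <;>
            rw [h] at hxyE <;> simp at hxyE
        have hlift : ReflTransGen (erel (G.edges \ {s(x, y)})) x y := by
          refine lift_deg2 (A := G.edges \ {s(x, y)}) (v := v) (a := a) (b := b)
            ?_ ?_ ?_ hr
          · intro e he
            obtain ⟨heB, hene⟩ := Finset.mem_sdiff.1 he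
            rw [hedges] at heB
            rcases Finset.mem_union.1 heB with heB | heB
            · exact Or.inr (Finset.mem_sdiff.2 ⟨(Finset.mem_sdiff.1 heB).1, by simpa using hene⟩)
            · exact Or.inl (Finset.mem_singleton.1 heB)
          · refine Finset.mem_sdiff.2 ⟨hva, ?_⟩
            simp only [Finset.mem_singleton]
            intro he
            exact hvnotxy (he ▸ Sym2.mem_mk_left _ _)
          · refine Finset.mem_sdiff.2 ⟨hvb, ?_⟩
            simp only [Finset.mem_singleton]
            intro he
            exact hvnotxy (he ▸ Sym2.mem_mk_left _ _)
        exact hacy x y (Finset.mem_sdiff.1 hxyE).1 hlift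
    have hunl : (unl G').card ≤ (unl G).card := by
      refine (unl_card_le ?_ ?_ ?_ ?_).1
      · rw [hverts]; exact Finset.erase_subset _ _
      · intro w; rw [hlabel]
      · intro x hx y hy hr
        have hxv : x ≠ v := by rw [hverts] at hx; exact (Finset.mem_erase.1 hx).1
        have hyv : y ≠ v := by rw [hverts] at hy; exact (Finset.mem_erase.1 hy).1
        exact (excise_deg2 hAatv (fun h => hav h) (fun h => hbv h) hB1 hB2 hxv hr).1 hyv
      · intro w hwG hw'
        rw [hverts] at hw'
        have : w = v := by
          by_contra hne
          exact hw' (Finset.mem_erase.2 ⟨hne, hwG⟩)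
        rw [this, hvnone]
    refine ⟨hwf', hacy', ?_⟩
    unfold Wt
    rw [hq]
    push_cast
    omega
  · -- deletion of an unlabeled vertex of degree ≤ 1
    have hE'eq : G'.edges = G.edges \ G.edges.filter (fun e => v ∈ e) := by
      rw [hedges, Finset.filter_not]
    have hwf' : G'.WF := by
      refine ⟨?_, ?_⟩
      · intro e he
        rw [hedges] at he
        obtain ⟨heE, hve⟩ := Finset.mem_filter.1 he
        refine ⟨(hwf.1 e heE).1, fun w hw => ?_⟩
        rw [hverts]
        refine Finset.mem_erase.2 ⟨fun hwv => hve (hwv ▸ hw), (hwf.1 e heE).2 w hw⟩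
      · intro w hw
        rw [hlabel] at hw
        rw [hverts]
        refine Finset.mem_erase.2 ⟨?_, hwf.2 w hw⟩
        rintro rfl
        rw [hvnone] at hw
        simp at hw
    have hedgesub : G'.edges ⊆ G.edges := by rw [hedges]; exact Finset.filter_subset _ _
    have hacy' : G'.Acyclic := by
      intro x y hxy hr
      rw [reachAvoiding_eq] at hr
      refine hacy x y (hedgesub hxy) (rtg_mono ?_ hr)
      intro e he
      obtain ⟨h1, h2⟩ := Finset.mem_sdiff.1 he
      exact Finset.mem_sdiff.2 ⟨hedgesub h1, h2⟩
    have hq : phiCount G' = phiCount G := phiCount_erase hverts hlabel hvnone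
    have hVcard : G'.verts.card + 1 = G.verts.card := by
      rw [hverts, Finset.card_erase_of_mem hv]
      have := Finset.card_pos.2 ⟨v, hv⟩
      omega
    rcases (G.edges.filter (fun e => v ∈ e)).eq_empty_or_nonempty with hflt | ⟨e₀, he₀⟩
    · -- degree 0
      have hnoedge : ∀ e ∈ G.edges, v ∉ e := by
        intro e he hve
        have : e ∈ G.edges.filter (fun e => v ∈ e) := Finset.mem_filter.2 ⟨he, hve⟩
        rw [hflt] at this
        simp at this
      have hEeq : G'.edges = G.edges := by rw [hE'eq, hflt]; simp
      have hcompv : comp G v = {v} := by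
        apply Finset.eq_singleton_iff_unique_mem.2
        refine ⟨comp_self hv, fun w hw => ?_⟩
        exact rtg_eq_of_no_edge hnoedge (mem_comp.1 hw).2
      have hK₀ : comp G v ∈ unl G := by
        refine mem_unl.2 ⟨v, ⟨hv, ?_⟩, rfl⟩
        intro w hw
        rw [hcompv] at hw
        rw [Finset.mem_singleton.1 hw, hvnone]
      have hunl := (unl_card_le (G := G) (G' := G')
        (by rw [hverts]; exact Finset.erase_subset _ _)
        (by intro w; rw [hlabel])
        (by intro x _ y _ hr; rw [hEeq]; exact hr)
        (by intro w hwG hw'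
            rw [hverts] at hw'
            have : w = v := by
              by_contra hne
              exact hw' (Finset.mem_erase.2 ⟨hne, hwG⟩)
            rw [this, hvnone])).2 (comp G v) hK₀
        (by intro x hx
            rw [hcompv] at hx
            rw [Finset.mem_singleton.1 hx, hverts]
            simp)
      refine ⟨hwf', hacy', ?_⟩
      unfold Wt
      rw [hq, hEeq]
      push_cast
      omega
    · -- degree 1
      have hcard1 : (G.edges.filter (fun e => v ∈ e)).card = 1 := by
        have : G.degree v ≤ 1 := hdeg
        unfold PGraph.degree at this
        have := Finset.card_pos.2 ⟨e₀, he₀⟩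
        omega
      have hflt : G.edges.filter (fun e => v ∈ e) = {e₀} :=
        Finset.eq_singleton_iff_unique_mem.2 ⟨he₀, fun e he =>
          Finset.card_le_one.1 (le_of_eq hcard1) e he e₀ he₀⟩
      obtain ⟨he₀E, hve₀⟩ := Finset.mem_filter.1 he₀
      obtain ⟨k, hk, he₀eq⟩ : ∃ k, k ≠ v ∧ e₀ = s(v, k) := by
        obtain ⟨x, y, rfl⟩ : ∃ x y, e₀ = s(x, y) := Sym2.ind (fun x y => ⟨x, y, rfl⟩) e₀
        have hnd := (hwf.1 _ he₀E).1
        rcases Sym2.mem_iff.1 hve₀ with rfl | rfl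
        · exact ⟨y, fun h => hnd (by simp [h]), rfl⟩
        · exact ⟨x, fun h => hnd (by simp [h]), Sym2.eq_swap⟩
      have huniq : ∀ e ∈ G.edges, v ∈ e → e = e₀ := by
        intro e he hve
        have : e ∈ G.edges.filter (fun e => v ∈ e) := Finset.mem_filter.2 ⟨he, hve⟩
        rw [hflt] at this
        exact Finset.mem_singleton.1 this
      have hEcard : G'.edges.card + 1 = G.edges.card := by
        rw [hE'eq, hflt, Finset.card_sdiff_of_subset (by simpa using he₀E)]
        have := Finset.card_pos.2 ⟨e₀, he₀E⟩
        simp only [Finset.card_singleton]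
        omega
      have hunl : (unl G').card ≤ (unl G).card := by
        refine (unl_card_le ?_ ?_ ?_ ?_).1
        · rw [hverts]; exact Finset.erase_subset _ _
        · intro w; rw [hlabel]
        · intro x hx y hy hr
          have hxv : x ≠ v := by rw [hverts] at hx; exact (Finset.mem_erase.1 hx).1
          have hyv : y ≠ v := by rw [hverts] at hy; exact (Finset.mem_erase.1 hy).1
          refine (excise_leaves (A := G.edges) (B := G'.edges) (V := {w : ℕ | w ≠ v})
            ?_ ?_ hxv hr).1 hyv
          · intro e he hall
            rw [hedges]
            refine Finset.mem_filter.2 ⟨he, fun hve => ?_⟩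
            exact hall v hve rfl
          · intro e he u hu huV
            have huv : u = v := not_not.1 huV
            subst huv
            have := huniq e he hu
            subst this
            refine ⟨⟨k, hk, by rw [he₀eq, Sym2.eq_swap]⟩, ?_⟩
            intro e' he' hue'
            rw [huniq e' he' hue']
        · intro w hwG hw'
          rw [hverts] at hw'
          have : w = v := by
            by_contra hne
            exact hw' (Finset.mem_erase.2 ⟨hne, hwG⟩)
          rw [this, hvnone]
      refine ⟨hwf', hacy', ?_⟩
      unfold Wt
      rw [hq]
      push_cast
      omega

lemma yields_key {X : Type} {G F' : PGraph (Option X)}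
    (h : Relation.ReflTransGen SuppressStep G F') (hwf : G.WF) (hacy : G.Acyclic) :
    F'.WF ∧ F'.Acyclic ∧
      Wt G + 2 * ((unl F').card : ℤ) ≤ Wt F' + 2 * ((unl G).card : ℤ) := by
  induction h using Relation.ReflTransGen.head_induction_on with
  | refl => exact ⟨hwf, hacy, le_refl _⟩
  | head hstep _ ih =>
    obtain ⟨hwf1, hacy1, hle1⟩ := suppress_key hstep hwf hacy
    obtain ⟨hwf2, hacy2, hle2⟩ := ih hwf1 hacy1
    exact ⟨hwf2, hacy2, by linarith⟩

section Cut

variable {X : Type} {F G : PGraph (Option X)} {E : Finset EEdge}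

lemma cut_key (hF : IsPhiForest F) (hcut : CutEEdges F E G) :
    G.WF ∧ G.Acyclic ∧
    Wt G = Wt F + 2 * ((E.filter (fun ee => ee.keep = none)).card : ℤ)
      + ((E.filter (fun ee => ee.keep ≠ none)).card : ℤ) ∧
    3 * ((unl G).card : ℤ) ≤ 2 * ((E.filter (fun ee => ee.keep = none)).card : ℤ)
      + ((E.filter (fun ee => ee.keep ≠ none)).card : ℤ) := by
  classical
  obtain ⟨hok, φf, hinj, hfresh, hverts, hedges, hlab1, hlab2, hlab3⟩ := hcut
  obtain ⟨hFwf, hFacy, hFdeg, hFlab, hFphi, hFmem, hFuniq⟩ := hF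
  set E₀ := E.filter (fun ee => ee.keep = none) with hE₀
  set E₁ := E.filter (fun ee => ee.keep ≠ none) with hE₁
  have hE₁E : E₁ ⊆ E := Finset.filter_subset _ _
  set cutim := E.image (fun ee => ee.e) with hcutim
  set newe := E₁.image (fun ee => s(ee.keep.getD 0, φf ee)) with hnewe
  have hGedges : G.edges = (F.edges \ cutim) ∪ newe := hedges
  have hGverts : G.verts = F.verts ∪ E₁.image φf := hverts
  have hcutsub : cutim ⊆ F.edges := by
    intro e he
    obtain ⟨ee, hee, rfl⟩ := Finset.mem_image.1 he
    exact (hok.1 ee hee).1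
  have hcutcard : cutim.card = E.card :=
    Finset.card_image_of_injOn (fun ee hee ee' hee' h => hok.2.2 ee hee ee' hee' h)
  have hkeepvert : ∀ ee ∈ E₁, ee.keep.getD 0 ∈ F.verts := by
    intro ee hee
    obtain ⟨heeE, hkn⟩ := Finset.mem_filter.1 hee
    obtain ⟨k, hk⟩ := Option.ne_none_iff_exists'.1 hkn
    rw [hk]
    exact (hFwf.1 _ ((hok.1 ee heeE).1)).2 _ ((hok.1 ee heeE).2.2 k hk)
  have hnewinj : Set.InjOn (fun ee => s(ee.keep.getD 0, φf ee)) ↑E₁ := by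
    intro ee hee ee' hee' h
    simp only at h
    rcases Sym2.eq_iff.1 h with ⟨h1, h2⟩ | ⟨h1, h2⟩
    · exact hinj (hE₁E (by simpa using hee)) (hE₁E (by simpa using hee')) h2
    · exact absurd (h1 ▸ hkeepvert ee (by simpa using hee))
        (hfresh ee' (hE₁E (by simpa using hee')))
  have hnewcard : newe.card = E₁.card := Finset.card_image_of_injOn hnewinj
  have hnew_not_F : ∀ e ∈ newe, e ∉ F.edges := by
    intro e he heF
    obtain ⟨ee, hee, rfl⟩ := Finset.mem_image.1 he
    exact hfresh ee (hE₁E hee)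
      ((hFwf.1 _ heF).2 (φf ee) (Sym2.mem_mk_right _ _))
  have hdisjE : Disjoint (F.edges \ cutim) newe := by
    rw [Finset.disjoint_right]
    intro e he hmem
    exact hnew_not_F e he (Finset.mem_sdiff.1 hmem).1
  have hdisjV : Disjoint F.verts (E₁.image φf) := by
    rw [Finset.disjoint_right]
    intro w hw hmem
    obtain ⟨ee, hee, rfl⟩ := Finset.mem_image.1 hw
    exact hfresh ee (hE₁E hee) hmem
  have hphicard : (E₁.image φf).card = E₁.card :=
    Finset.card_image_of_injOn (fun ee hee ee' hee' h =>
      hinj (hE₁E (by simpa using hee)) (hE₁E (by simpa using hee')) h)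
  have hEG : (G.edges.card : ℤ) = (F.edges.card : ℤ) - E.card + E₁.card := by
    rw [hGedges, Finset.card_union_of_disjoint hdisjE, Finset.card_sdiff_of_subset hcutsub, hnewcard]
    have : cutim.card ≤ F.edges.card := Finset.card_le_card hcutsub
    push_cast
    omega
  have hVG : (G.verts.card : ℤ) = (F.verts.card : ℤ) + E₁.card := by
    rw [hGverts, Finset.card_union_of_disjoint hdisjV, hphicard]
    push_cast
    ring
  have hqG : (phiCount G : ℤ) = (phiCount F : ℤ) + E₁.card := by
    unfold phiCount
    rw [hGverts, Finset.filter_union]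
    rw [Finset.card_union_of_disjoint (Finset.disjoint_filter_filter hdisjV)]
    have h1 : F.verts.filter (fun w => G.label w = some none)
        = F.verts.filter (fun w => F.label w = some none) := by
      apply Finset.filter_congr
      intro w hw
      rw [hlab1 w hw]
    have h2 : (E₁.image φf).filter (fun w => G.label w = some none) = E₁.image φf := by
      apply Finset.filter_true_of_mem
      intro w hw
      obtain ⟨ee, hee, rfl⟩ := Finset.mem_image.1 hw
      exact hlab2 ee (hE₁E hee) (Finset.mem_filter.1 hee).2
    rw [h1, h2, hphicard]
    push_cast
    ring
  have hE01 : E₀.card + E₁.card = E.card := Finset.card_filter_add_card_filter_not _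
  -- pendant edges are the unique G-edges at the φ vertices
  have hGold : ∀ e ∈ G.edges, (∀ u ∈ e, u ∈ F.verts) → e ∈ F.edges \ cutim := by
    intro e he hall
    rw [hGedges] at he
    rcases Finset.mem_union.1 he with he | he
    · exact he
    · obtain ⟨ee, hee, rfl⟩ := Finset.mem_image.1 he
      exact absurd (hall (φf ee) (Sym2.mem_mk_right _ _)) (hfresh ee (hE₁E hee))
  have hGleaf : ∀ e ∈ G.edges, ∀ u ∈ e, u ∉ F.verts →
      (∃ ee ∈ E₁, u = φf ee ∧ e = s(ee.keep.getD 0, φf ee)) := by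
    intro e he u hu huF
    rw [hGedges] at he
    rcases Finset.mem_union.1 he with he | he
    · exact absurd ((hFwf.1 _ (Finset.mem_sdiff.1 he).1).2 u hu) huF
    · obtain ⟨ee, hee, rfl⟩ := Finset.mem_image.1 he
      rcases Sym2.mem_iff.1 hu with rfl | rfl
      · exact absurd (hkeepvert ee hee) huF
      · exact ⟨ee, hee, rfl, rfl⟩
  have hGuniqphi : ∀ ee ∈ E₁, ∀ e ∈ G.edges, φf ee ∈ e →
      e = s(ee.keep.getD 0, φf ee) := by
    intro ee hee e he hmem
    have hφF : φf ee ∉ F.verts := hfresh ee (hE₁E hee)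
    obtain ⟨ee', hee', heq, rfl⟩ := hGleaf e he _ hmem hφF
    have : ee = ee' := hinj (hE₁E hee) (hE₁E hee') heq
    rw [this]
  have hwfG : G.WF := by
    refine ⟨?_, ?_⟩
    · intro e he
      rw [hGedges] at he
      rcases Finset.mem_union.1 he with he | he
      · obtain ⟨heF, _⟩ := Finset.mem_sdiff.1 he
        refine ⟨(hFwf.1 e heF).1, fun w hw => ?_⟩
        rw [hGverts]
        exact Finset.mem_union_left _ ((hFwf.1 e heF).2 w hw)
      · obtain ⟨ee, hee, rfl⟩ := Finset.mem_image.1 he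
        constructor
        · rw [Sym2.mk_isDiag_iff]
          intro hkφ
          exact hfresh ee (hE₁E hee) (hkφ ▸ hkeepvert ee hee)
        · intro w hw
          rw [hGverts]
          rcases Sym2.mem_iff.1 hw with rfl | rfl
          · exact Finset.mem_union_left _ (hkeepvert ee hee)
          · exact Finset.mem_union_right _ (Finset.mem_image_of_mem φf hee)
    · intro w hw
      by_contra hwG
      rw [hlab3 w hwG] at hw
      simp at hw
  have hacyG : G.Acyclic := by
    intro x y hxy hr
    rw [reachAvoiding_eq] at hr
    by_cases hold : s(x, y) ∈ F.edges \ cutim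
    · -- an original edge: excise the pendant leaves and contradict acyclicity of F
      have hxF : x ∈ F.verts := (hFwf.1 _ (Finset.mem_sdiff.1 hold).1).2 x (Sym2.mem_mk_left _ _)
      have hyF : y ∈ F.verts := (hFwf.1 _ (Finset.mem_sdiff.1 hold).1).2 y (Sym2.mem_mk_right _ _)
      have hexc := (excise_leaves (A := G.edges \ {s(x, y)})
          (B := (F.edges \ cutim) \ {s(x, y)}) (V := {w : ℕ | w ∈ F.verts})
          ?_ ?_ hxF hr).1 hyF
      · refine hFacy x y (Finset.mem_sdiff.1 hold).1 (rtg_mono ?_ hexc)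
        intro e he
        obtain ⟨he1, he2⟩ := Finset.mem_sdiff.1 he
        exact Finset.mem_sdiff.2 ⟨(Finset.mem_sdiff.1 he1).1, he2⟩
      · intro e he hall
        obtain ⟨he1, he2⟩ := Finset.mem_sdiff.1 he
        exact Finset.mem_sdiff.2 ⟨hGold e he1 hall, he2⟩
      · intro e he u hu huF
        obtain ⟨he1, he2⟩ := Finset.mem_sdiff.1 he
        obtain ⟨ee, hee, rfl, rfl⟩ := hGleaf e he1 u hu huF
        refine ⟨⟨ee.keep.getD 0, hkeepvert ee hee, rfl⟩, ?_⟩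
        intro e' he' hue'
        rw [hGuniqphi ee hee e' (Finset.mem_sdiff.1 he').1 hue']
    · -- a pendant edge
      have hxyG : s(x, y) ∈ newe := by
        have : s(x, y) ∈ G.edges := hxy
        rw [hGedges] at this
        rcases Finset.mem_union.1 this with h | h
        · exact absurd h hold
        · exact h
      obtain ⟨ee, hee, heq⟩ := Finset.mem_image.1 hxyG
      have hφnone : ∀ e ∈ G.edges \ {s(x, y)}, φf ee ∉ e := by
        intro e he hmem
        obtain ⟨he1, he2⟩ := Finset.mem_sdiff.1 he
        exact he2 (by rw [hGuniqphi ee hee e he1 hmem, heq]; exact Finset.mem_singleton_self _)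
      have hkφ : ee.keep.getD 0 ≠ φf ee := by
        intro h
        exact hfresh ee (hE₁E hee) (h ▸ hkeepvert ee hee)
      rcases Sym2.eq_iff.1 heq.symm with ⟨rfl, rfl⟩ | ⟨rfl, rfl⟩
      · have := rtg_eq_of_no_edge hφnone (rtg_symm hr)
        exact hkφ this
      · have := rtg_eq_of_no_edge hφnone hr
        exact hkφ this
  refine ⟨hwfG, hacyG, ?_, ?_⟩
  · unfold Wt
    rw [hqG, hEG, hVG]
    have : (E.card : ℤ) = E₀.card + E₁.card := by exact_mod_cast hE01.symm
    rw [this]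
    ring
  · -- the counting argument: 3 * #(all-unlabeled components) ≤ 2#E₀ + #E₁
    have hKmem : ∀ K ∈ unl G, ∀ v ∈ K, v ∈ F.verts ∧ F.label v = none := by
      intro K hK v hv
      have hvnone : G.label v = none := (unl_spec hK hv).2 v hv
      have hvG : v ∈ G.verts := unl_subset hK hv
      have hvF : v ∈ F.verts := by
        rw [hGverts] at hvG
        rcases Finset.mem_union.1 hvG with h | h
        · exact h
        · obtain ⟨ee, hee, rfl⟩ := Finset.mem_image.1 h
          rw [hlab2 ee (hE₁E hee) (Finset.mem_filter.1 hee).2] at hvnone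
          cases hvnone
      exact ⟨hvF, by rw [← hlab1 v hvF]; exact hvnone⟩
    have hclosure : ∀ K ∈ unl G, ∀ e ∈ G.edges, ∀ v ∈ K, v ∈ e → ∀ w ∈ e, w ∈ K := by
      intro K hK e he v hv hve w hwe
      by_cases hvw : v = w
      · rwa [← hvw]
      · have hKe : K = comp G v := (unl_spec hK hv).1
        have heq : e = s(v, w) := (Sym2.mem_and_mem_iff hvw).1 ⟨hve, hwe⟩
        rw [hKe]
        exact mem_comp.2 ⟨(hwfG.1 e he).2 w hwe,
          ReflTransGen.single (show s(v, w) ∈ G.edges from heq ▸ he)⟩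
    have hpend : ∀ ee ∈ E₁, s(ee.keep.getD 0, φf ee) ∈ G.edges := by
      intro ee hee
      rw [hGedges]
      exact Finset.mem_union_right _ (Finset.mem_image_of_mem _ hee)
    have hphiK : ∀ K ∈ unl G, ∀ ee ∈ E₁, φf ee ∉ K := by
      intro K hK ee hee hmem
      have := (unl_spec hK hmem).2 _ hmem
      rw [hlab2 ee (hE₁E hee) (Finset.mem_filter.1 hee).2] at this
      cases this
    have hnophi : ∀ K ∈ unl G, ∀ ee ∈ E₁, ee.keep.getD 0 ∉ K := by
      intro K hK ee hee hkK
      exact hphiK K hK ee hee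
        (hclosure K hK _ (hpend ee hee) _ hkK (Sym2.mem_mk_left _ _) _ (Sym2.mem_mk_right _ _))
    -- per-component bound
    have hKbound : ∀ K ∈ unl G,
        3 ≤ ∑ v ∈ K, (E.filter (fun ee => v ∈ ee.e)).card := by
      intro K hK
      have hKne : K.Nonempty := unl_nonempty hK
      set Ek := G.edges.filter (fun e => ∀ u ∈ e, u ∈ K) with hEk
      have hEkwf : ∀ e ∈ Ek, ¬e.IsDiag ∧ ∀ u ∈ e, u ∈ K := fun e he =>
        ⟨(hwfG.1 e (Finset.mem_filter.1 he).1).1, (Finset.mem_filter.1 he).2⟩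
      have hEkacy : ∀ u v, s(u, v) ∈ Ek → ¬ ReflTransGen (erel (Ek \ {s(u, v)})) u v := by
        intro u v huv hr
        refine hacyG u v (Finset.mem_filter.1 huv).1 ?_
        rw [reachAvoiding_eq]
        refine rtg_mono ?_ hr
        intro e he
        obtain ⟨h1, h2⟩ := Finset.mem_sdiff.1 he
        exact Finset.mem_sdiff.2 ⟨(Finset.mem_filter.1 h1).1, h2⟩
      have hEkcard : Ek.card + 1 ≤ K.card := (forest_card Ek K hEkwf hEkacy hKne).1
      -- the two kinds of F-edges at each vertex of K
      have hsplit : ∀ v ∈ K,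
          (Ek.filter (fun e => v ∈ e)).card + (E.filter (fun ee => v ∈ ee.e)).card = 3 := by
        intro v hv
        obtain ⟨hvF, hvFnone⟩ := hKmem K hK v hv
        have hdeg3 : (F.edges.filter (fun e => v ∈ e)).card = 3 := by
          have h1 := hFdeg v hvF
          have h2 : ¬ F.degree v ≤ 1 := by
            intro hle
            have := (hFlab v hvF).2 hle
            rw [hvFnone] at this
            simp at this
          show F.degree v = 3
          omega
        have hd : Disjoint ((F.edges \ cutim).filter (fun e => v ∈ e))
            (cutim.filter (fun e => v ∈ e)) :=
          Finset.disjoint_filter_filter Finset.sdiff_disjoint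
        have hcard3 : ((F.edges \ cutim).filter (fun e => v ∈ e)).card
            + (cutim.filter (fun e => v ∈ e)).card = 3 := by
          rw [← Finset.card_union_of_disjoint hd, ← Finset.filter_union,
            Finset.sdiff_union_of_subset hcutsub, hdeg3]
        have heqa : (F.edges \ cutim).filter (fun e => v ∈ e) = Ek.filter (fun e => v ∈ e) := by
          apply Finset.ext
          intro e
          simp only [Finset.mem_filter]
          constructor
          · rintro ⟨he, hve⟩
            have heG : e ∈ G.edges := by rw [hGedges]; exact Finset.mem_union_left _ he
            exact ⟨Finset.mem_filter.2 ⟨heG, hclosure K hK e heG v hv hve⟩, hve⟩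
          · rintro ⟨he, hve⟩
            obtain ⟨heG, hall⟩ := Finset.mem_filter.1 he
            refine ⟨?_, hve⟩
            rw [hGedges] at heG
            rcases Finset.mem_union.1 heG with h | h
            · exact h
            · obtain ⟨ee, hee, rfl⟩ := Finset.mem_image.1 h
              exact absurd (hall (φf ee) (Sym2.mem_mk_right _ _)) (hphiK K hK ee hee)
        have heqb : cutim.filter (fun e => v ∈ e) = (E.filter (fun ee => v ∈ ee.e)).image (fun ee => ee.e) := by
          apply Finset.ext
          intro e
          constructor
          · intro he
            obtain ⟨hec, hve⟩ := Finset.mem_filter.1 he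
            obtain ⟨ee, hee, rfl⟩ := Finset.mem_image.1 hec
            exact Finset.mem_image.2 ⟨ee, Finset.mem_filter.2 ⟨hee, hve⟩, rfl⟩
          · intro he
            obtain ⟨ee, hee2, rfl⟩ := Finset.mem_image.1 he
            obtain ⟨hee, hve⟩ := Finset.mem_filter.1 hee2
            exact Finset.mem_filter.2 ⟨Finset.mem_image_of_mem _ hee, hve⟩
        have hcardb : (cutim.filter (fun e => v ∈ e)).card = (E.filter (fun ee => v ∈ ee.e)).card := by
          rw [heqb]
          exact Finset.card_image_of_injOn (fun ee hee ee' hee' h =>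
            hok.2.2 ee (Finset.mem_of_mem_filter _ hee) ee' (Finset.mem_of_mem_filter _ hee') h)
        rw [← hcard3, heqa, hcardb]
      -- handshake within the component
      have hhand : ∑ v ∈ K, (Ek.filter (fun e => v ∈ e)).card = 2 * Ek.card := by
        have h1 : ∀ v ∈ K, (Ek.filter (fun e => v ∈ e)).card
            = ∑ e ∈ Ek, (if v ∈ e then 1 else 0) := by
          intro v _
          rw [Finset.card_filter]
        rw [Finset.sum_congr rfl h1, Finset.sum_comm]
        have h2 : ∀ e ∈ Ek, ∑ v ∈ K, (if v ∈ e then 1 else 0) = 2 := by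
          intro e he
          obtain ⟨x, y, rfl⟩ : ∃ x y, e = s(x, y) := Sym2.ind (fun x y => ⟨x, y, rfl⟩) e
          have hxy : x ≠ y := fun h => (hEkwf _ he).1 (by simp [h])
          have hxK : x ∈ K := (hEkwf _ he).2 x (Sym2.mem_mk_left _ _)
          have hyK : y ∈ K := (hEkwf _ he).2 y (Sym2.mem_mk_right _ _)
          have : ∑ v ∈ K, (if v ∈ s(x, y) then 1 else 0) = (K.filter (fun v => v ∈ s(x, y))).card :=
            (Finset.card_filter _ _).symm
          rw [this]
          have : K.filter (fun v => v ∈ s(x, y)) = {x, y} := by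
            apply Finset.ext
            intro v
            simp only [Finset.mem_filter, Sym2.mem_iff, Finset.mem_insert, Finset.mem_singleton]
            constructor
            · rintro ⟨_, h⟩; exact h
            · rintro (rfl | rfl)
              · exact ⟨hxK, Or.inl rfl⟩
              · exact ⟨hyK, Or.inr rfl⟩
          rw [this, Finset.card_insert_of_notMem (by simpa using hxy), Finset.card_singleton]
        rw [Finset.sum_congr rfl h2, Finset.sum_const, smul_eq_mul, mul_comm]
      have hsum3 : ∑ v ∈ K, ((Ek.filter (fun e => v ∈ e)).card
          + (E.filter (fun ee => v ∈ ee.e)).card) = 3 * K.card := by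
        rw [Finset.sum_congr rfl hsplit, Finset.sum_const, smul_eq_mul, mul_comm]
      rw [Finset.sum_add_distrib, hhand] at hsum3
      have hK1 : 1 ≤ K.card := Finset.card_pos.2 hKne
      omega
    -- assemble: sum over the union of unlabeled components
    have hdisjU : (↑(unl G) : Set (Finset ℕ)).PairwiseDisjoint id := by
      intro K hK K' hK' hne
      simp only [Function.onFun, id]
      rw [Finset.disjoint_left]
      intro u huK huK'
      exact hne ((unl_spec (by simpa using hK) huK).1.trans (unl_spec (by simpa using hK') huK').1.symm)
    set B := (unl G).biUnion id with hB
    have hsum1 : ∑ v ∈ B, (E.filter (fun ee => v ∈ ee.e)).card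
        = ∑ K ∈ unl G, ∑ v ∈ K, (E.filter (fun ee => v ∈ ee.e)).card := by
      rw [hB]
      exact Finset.sum_biUnion hdisjU
    have hlow : 3 * (unl G).card ≤ ∑ v ∈ B, (E.filter (fun ee => v ∈ ee.e)).card := by
      rw [hsum1]
      calc 3 * (unl G).card = ∑ _K ∈ unl G, 3 := by rw [Finset.sum_const, smul_eq_mul, mul_comm]
      _ ≤ _ := Finset.sum_le_sum hKbound
    have hsum2 : ∑ v ∈ B, (E.filter (fun ee => v ∈ ee.e)).card
        = ∑ ee ∈ E, (B.filter (fun v => v ∈ ee.e)).card := by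
      have h1 : ∀ v ∈ B, (E.filter (fun ee => v ∈ ee.e)).card
          = ∑ ee ∈ E, (if v ∈ ee.e then 1 else 0) := by
        intro v _
        rw [Finset.card_filter]
      rw [Finset.sum_congr rfl h1, Finset.sum_comm]
      apply Finset.sum_congr rfl
      intro ee _
      rw [Finset.card_filter]
    have hBnok : ∀ ee ∈ E₁, ee.keep.getD 0 ∉ B := by
      intro ee hee hkB
      obtain ⟨K, hK, hkK⟩ := Finset.mem_biUnion.1 hkB
      exact hnophi K hK ee hee hkK
    have hcap : ∀ ee ∈ E, (B.filter (fun v => v ∈ ee.e)).card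
        ≤ if ee.keep = none then 2 else 1 := by
      intro ee hee
      obtain ⟨x, y, hxy⟩ : ∃ x y, ee.e = s(x, y) := Sym2.ind (fun x y => ⟨x, y, rfl⟩) ee.e
      by_cases hk : ee.keep = none
      · rw [if_pos hk]
        have : B.filter (fun v => v ∈ ee.e) ⊆ {x, y} := by
          intro v hv
          have := (Finset.mem_filter.1 hv).2
          rw [hxy] at this
          simpa using this
        calc (B.filter (fun v => v ∈ ee.e)).card ≤ ({x, y} : Finset ℕ).card :=
              Finset.card_le_card this
          _ ≤ 2 := Finset.card_insert_le _ _ |>.trans (by simp)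
      · rw [if_neg hk]
        have heeE₁ : ee ∈ E₁ := Finset.mem_filter.2 ⟨hee, hk⟩
        obtain ⟨k, hksome⟩ := Option.ne_none_iff_exists'.1 hk
        have hkgd : ee.keep.getD 0 = k := by rw [hksome]; rfl
        have hke : k ∈ ee.e := (hok.1 ee hee).2.2 k hksome
        have hknotB : k ∉ B := hkgd ▸ hBnok ee heeE₁
        rw [hxy] at hke
        have hsub : ∀ v ∈ B.filter (fun v => v ∈ ee.e), v ∈ ({x, y} : Finset ℕ) ∧ v ≠ k := by
          intro v hv
          obtain ⟨hvB, hve⟩ := Finset.mem_filter.1 hv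
          rw [hxy] at hve
          refine ⟨by simpa using hve, ?_⟩
          rintro rfl
          exact hknotB hvB
        rcases Sym2.mem_iff.1 hke with rfl | rfl
        · -- k = x
          refine Finset.card_le_one.2 (fun a ha b hb => ?_) |>.trans (le_refl 1)
          obtain ⟨ha1, ha2⟩ := hsub a ha
          obtain ⟨hb1, hb2⟩ := hsub b hb
          simp only [Finset.mem_insert, Finset.mem_singleton] at ha1 hb1
          rcases ha1 with rfl | rfl
          · exact absurd rfl ha2
          · rcases hb1 with rfl | rfl
            · exact absurd rfl hb2
            · rfl
        · -- k = y
          refine Finset.card_le_one.2 (fun a ha b hb => ?_) |>.trans (le_refl 1)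
          obtain ⟨ha1, ha2⟩ := hsub a ha
          obtain ⟨hb1, hb2⟩ := hsub b hb
          simp only [Finset.mem_insert, Finset.mem_singleton] at ha1 hb1
          rcases ha1 with rfl | rfl
          · rcases hb1 with rfl | rfl
            · rfl
            · exact absurd rfl hb2
          · exact absurd rfl ha2
    have hcapsum : ∑ ee ∈ E, (if ee.keep = none then 2 else 1) = 2 * E₀.card + E₁.card := by
      rw [← Finset.sum_filter_add_sum_filter_not E (fun ee => ee.keep = none)]
      have h1 : ∑ ee ∈ E.filter (fun ee => ee.keep = none), (if ee.keep = none then 2 else 1) = 2 * E₀.card := by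
        rw [Finset.sum_congr rfl (fun ee hee => if_pos (Finset.mem_filter.1 hee).2),
          Finset.sum_const, smul_eq_mul, mul_comm]
      have h2 : ∑ ee ∈ E.filter (fun ee => ¬ ee.keep = none), (if ee.keep = none then 2 else 1) = E₁.card := by
        rw [Finset.sum_congr rfl (fun ee hee => if_neg (Finset.mem_filter.1 hee).2),
          Finset.sum_const, smul_eq_mul, mul_one]
      rw [h1, h2]
    have hfinal : 3 * (unl G).card ≤ 2 * E₀.card + E₁.card := by
      calc 3 * (unl G).card ≤ ∑ v ∈ B, (E.filter (fun ee => v ∈ ee.e)).card := hlow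
        _ = ∑ ee ∈ E, (B.filter (fun v => v ∈ ee.e)).card := hsum2
        _ ≤ ∑ ee ∈ E, (if ee.keep = none then 2 else 1) := Finset.sum_le_sum hcap
        _ = 2 * E₀.card + E₁.card := hcapsum
    exact_mod_cast hfinal

end Cut

lemma acyclic_card_le {X : Type} {H : PGraph (Option X)} (hwf : H.WF) (hacy : H.Acyclic) :
    H.edges.card ≤ H.verts.card := by
  rcases H.verts.eq_empty_or_nonempty with hes | hne
  · have : H.edges = ∅ := by
      apply Finset.eq_empty_iff_forall_notMem.2
      intro e he
      obtain ⟨x, y, rfl⟩ : ∃ x y, e = s(x, y) := Sym2.ind (fun x y => ⟨x, y, rfl⟩) e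
      have := (hwf.1 _ he).2 x (Sym2.mem_mk_left _ _)
      rw [hes] at this
      simp at this
    simp [this]
  · have := (forest_card H.edges H.verts (fun e he => hwf.1 e he)
      (fun u v huv hr => hacy u v huv (by rw [reachAvoiding_eq]; exact hr)) hne).1
    omega

lemma weight_eq_Wt {X : Type} {H : PGraph (Option X)} (h : H.edges.card ≤ H.verts.card) :
    weight H = Wt H := by
  simp only [weight, Wt, PGraph.numComponents]
  omega

lemma part1 {X : Type} (F G F' : PGraph (Option X)) (E : Finset EEdge)
    (hF : IsPhiForest F) (hE : E.Nonempty) (hcut : CutEEdges F E G)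
    (hy : Yields G F') : weight F < weight F' := by
  obtain ⟨hwfG, hacyG, hWt, hcount⟩ := cut_key hF hcut
  obtain ⟨hchain, _⟩ := hy
  obtain ⟨hwfF', hacyF', hle⟩ := yields_key hchain hwfG hacyG
  have hwF : weight F = Wt F := weight_eq_Wt (acyclic_card_le hF.1 hF.2.1)
  have hwF' : weight F' = Wt F' := weight_eq_Wt (acyclic_card_le hwfF' hacyF')
  have hEcard : 1 ≤ (E.filter (fun ee => ee.keep = none)).card
      + (E.filter (fun ee => ee.keep ≠ none)).card := by
    have h2 := Finset.card_filter_add_card_filter_not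
      (s := E) (p := fun ee => ee.keep = none)
    have h3 := Finset.card_pos.2 hE
    simp only [ne_eq]
    omega
  have hu : (0 : ℤ) ≤ ((unl F').card : ℤ) := by positivity
  rw [hwF, hwF']
  have h1 : (1 : ℤ) ≤ ((E.filter (fun ee => ee.keep = none)).card : ℤ)
      + ((E.filter (fun ee => ee.keep ≠ none)).card : ℤ) := by exact_mod_cast hEcard
  omega

lemma PGraph.ext' {G H : PGraph L} (h1 : G.verts = H.verts) (h2 : G.edges = H.edges)
    (h3 : G.label = H.label) : G = H := by
  cases G; cases H
  simp only at h1 h2 h3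
  subst h1; subst h2; subst h3
  rfl

lemma isom_refl (G : PGraph L) : PGraph.Isom G G :=
  ⟨id, ⟨Set.bijOn_id _, fun _ _ _ _ => Iff.rfl, fun _ _ => rfl⟩⟩

lemma isom_symm {G H : PGraph L} (h : PGraph.Isom G H) : PGraph.Isom H G := by
  obtain ⟨f, hbij, hedge, hlab⟩ := h
  set g := Function.invFunOn f ↑G.verts with hg
  have hinv : Set.InvOn g f ↑G.verts ↑H.verts := hbij.invOn_invFunOn
  have hgbij : Set.BijOn g ↑H.verts ↑G.verts := Set.BijOn.symm hinv.symm hbij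
  refine ⟨g, hgbij, ?_, ?_⟩
  · intro u hu v hv
    have hgu : g u ∈ G.verts := hgbij.mapsTo hu
    have hgv : g v ∈ G.verts := hgbij.mapsTo hv
    have := hedge (g u) hgu (g v) hgv
    rw [hinv.2 hu, hinv.2 hv] at this
    exact this.symm
  · intro v hv
    have hgv : g v ∈ G.verts := hgbij.mapsTo hv
    have := hlab (g v) hgv
    rw [hinv.2 hv] at this
    exact this.symm

lemma isom_trans {G H K : PGraph L} (h1 : PGraph.Isom G H) (h2 : PGraph.Isom H K) :
    PGraph.Isom G K := by
  obtain ⟨f, hfbij, hfedge, hflab⟩ := h1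
  obtain ⟨g, hgbij, hgedge, hglab⟩ := h2
  refine ⟨g ∘ f, hgbij.comp hfbij, ?_, ?_⟩
  · intro u hu v hv
    exact (hfedge u hu v hv).trans (hgedge (f u) (hfbij.mapsTo hu) (f v) (hfbij.mapsTo hv))
  · intro v hv
    exact (hglab (f v) (hfbij.mapsTo hv)).trans (hflab v hv)

lemma isom_card_verts {G H : PGraph L} (h : PGraph.Isom G H) :
    G.verts.card = H.verts.card := by
  obtain ⟨f, hbij, _, _⟩ := h
  exact Finset.card_bij (fun a _ => f a) (fun a ha => hbij.mapsTo ha)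
    (fun a ha b hb hab => hbij.injOn ha hb hab)
    (fun b hb => by
      obtain ⟨a, ha, rfl⟩ := hbij.surjOn hb
      exact ⟨a, ha, rfl⟩)

lemma isom_card_edges {G H : PGraph L} (hG : G.WF) (hH : H.WF) (h : PGraph.Isom G H) :
    G.edges.card = H.edges.card := by
  obtain ⟨f, hbij, hedge, _⟩ := h
  refine Finset.card_bij (fun e _ => Sym2.map f e) ?_ ?_ ?_
  · intro e he
    obtain ⟨x, y, rfl⟩ : ∃ x y, e = s(x, y) := Sym2.ind (fun x y => ⟨x, y, rfl⟩) e
    have hx := (hG.1 _ he).2 x (Sym2.mem_mk_left _ _)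
    have hy := (hG.1 _ he).2 y (Sym2.mem_mk_right _ _)
    show Sym2.map f s(x, y) ∈ H.edges
    rw [Sym2.map_pair_eq]
    exact (hedge x hx y hy).1 he
  · intro e he e' he' heq
    obtain ⟨x, y, rfl⟩ : ∃ x y, e = s(x, y) := Sym2.ind (fun x y => ⟨x, y, rfl⟩) e
    obtain ⟨x', y', rfl⟩ : ∃ x y, e' = s(x, y) := Sym2.ind (fun x y => ⟨x, y, rfl⟩) e'
    have hx := (hG.1 _ he).2 x (Sym2.mem_mk_left _ _)
    have hy := (hG.1 _ he).2 y (Sym2.mem_mk_right _ _)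
    have hx' := (hG.1 _ he').2 x' (Sym2.mem_mk_left _ _)
    have hy' := (hG.1 _ he').2 y' (Sym2.mem_mk_right _ _)
    simp only [Sym2.map_pair_eq] at heq
    rcases Sym2.eq_iff.1 heq with ⟨h1, h2⟩ | ⟨h1, h2⟩
    · rw [hbij.injOn hx hx' h1, hbij.injOn hy hy' h2]
    · rw [hbij.injOn hx hy' h1, hbij.injOn hy hx' h2, Sym2.eq_swap]
  · intro e' he'
    obtain ⟨x', y', rfl⟩ : ∃ x y, e' = s(x, y) := Sym2.ind (fun x y => ⟨x, y, rfl⟩) e'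
    have hx' := (hH.1 _ he').2 x' (Sym2.mem_mk_left _ _)
    have hy' := (hH.1 _ he').2 y' (Sym2.mem_mk_right _ _)
    obtain ⟨x, hx, rfl⟩ := hbij.surjOn hx'
    obtain ⟨y, hy, rfl⟩ := hbij.surjOn hy'
    refine ⟨s(x, y), (hedge x hx y hy).2 he', ?_⟩
    show Sym2.map f s(x, y) = s(f x, f y)
    rw [Sym2.map_pair_eq]

lemma isom_phiCount {X : Type} {G H : PGraph (Option X)} (h : PGraph.Isom G H) :
    phiCount G = phiCount H := by
  obtain ⟨f, hbij, _, hlab⟩ := h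
  unfold phiCount
  refine Finset.card_bij (fun a _ => f a) ?_ ?_ ?_
  · intro a ha
    obtain ⟨haG, hal⟩ := Finset.mem_filter.1 ha
    refine Finset.mem_filter.2 ⟨hbij.mapsTo haG, ?_⟩
    rw [hlab a haG, hal]
  · intro a ha b hb hab
    exact hbij.injOn (Finset.mem_coe.2 (Finset.mem_of_mem_filter _ ha))
      (Finset.mem_coe.2 (Finset.mem_of_mem_filter _ hb)) hab
  · intro b hb
    obtain ⟨hbH, hbl⟩ := Finset.mem_filter.1 hb
    obtain ⟨a, ha, rfl⟩ := hbij.surjOn hbH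
    refine ⟨a, Finset.mem_filter.2 ⟨ha, ?_⟩, rfl⟩
    rw [← hlab a ha]
    exact hbl

lemma isom_weight {X : Type} {G H : PGraph (Option X)} (hG : G.WF) (hH : H.WF)
    (h : PGraph.Isom G H) : weight G = weight H := by
  unfold weight PGraph.numComponents
  rw [isom_card_verts h, isom_card_edges hG hH h, isom_phiCount h]

section ToPhi

variable {X : Type} {T : PGraph X}

lemma toPhi_wf (hT : IsXTree T) : (toPhi T).WF := by
  obtain ⟨⟨hwf, _, _, _⟩, _⟩ := hT
  refine ⟨fun e he => hwf.1 e he, fun v hv => ?_⟩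
  apply hwf.2
  simpa [toPhi] using hv

lemma toPhi_label_none {v : ℕ} (hT : IsXTree T) (hv : v ∉ T.verts) :
    (toPhi T).label v = none := by
  obtain ⟨⟨hwf, _, _, _⟩, _⟩ := hT
  have : T.label v = none := by
    rcases h : T.label v with _ | x
    · rfl
    · exact absurd (hwf.2 v (by simp [h])) hv
  simp [toPhi, this]

lemma toPhi_phiForest (hT : IsXTree T) : IsPhiForest (toPhi T) := by
  obtain ⟨⟨hwf, hne, hconn, hacy⟩, hdeg, hlabdeg, hlabmem, huniq⟩ := hT
  refine ⟨toPhi_wf ⟨⟨hwf, hne, hconn, hacy⟩, hdeg, hlabdeg, hlabmem, huniq⟩, hacy,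
    ?_, ?_, ?_, ?_, ?_⟩
  · intro v hv
    rcases hdeg v hv with h | h
    · exact Or.inr (Or.inl h)
    · exact Or.inr (Or.inr h)
  · intro v hv
    have h1 := hlabdeg v hv
    have h2 := hdeg v hv
    constructor
    · intro hs
      have : (T.label v).isSome := by
        simpa [toPhi, Option.isSome_map] using hs
      have := h1.1 this
      show PGraph.degree _ v ≤ 1
      have hdd : PGraph.degree (toPhi T) v = T.degree v := rfl
      omega
    · intro hle
      have hdd : PGraph.degree (toPhi T) v = T.degree v := rfl
      have : T.degree v = 1 := by
        unfold PGraph.degree at *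
        simp only [toPhi] at hle
        omega
      have := h1.2 this
      simpa [toPhi, Option.isSome_map] using this
  · intro v hv h
    exfalso
    simp only [toPhi, Option.map_eq_some_iff] at h
    obtain ⟨a, _, ha⟩ := h
    cases ha
  · intro v hv x h
    exact Set.mem_univ x
  · intro x _
    obtain ⟨v, ⟨hv1, hv2⟩, hv3⟩ := huniq x (Set.mem_univ x)
    refine ⟨v, ⟨hv1, by simp [toPhi, hv2]⟩, ?_⟩
    intro u ⟨hu1, hu2⟩
    refine hv3 u ⟨hu1, ?_⟩
    simpa [toPhi, Option.map_eq_some_iff] using hu2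

lemma toPhi_reduced (hT : IsXTree T) : Reduced (toPhi T) := by
  intro v hv hnone
  obtain ⟨⟨hwf, _, _, _⟩, hdeg, hlabdeg, _, _⟩ := hT
  have hTnone : T.label v = none := by
    rcases h : T.label v with _ | x
    · rfl
    · exfalso
      rw [show (toPhi T).label v = (T.label v).map some from rfl, h] at hnone
      simp at hnone
  have h1 : ¬ (T.label v).isSome := by simp [hTnone]
  have h2 := (hlabdeg v hv).not.1 (by simpa using h1)
  rcases hdeg v hv with h | h
  · exact absurd h h2
  · show 3 ≤ PGraph.degree (toPhi T) v
    have : PGraph.degree (toPhi T) v = T.degree v := rfl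
    omega

lemma toPhi_card (hT : IsXTree T) : T.edges.card + 1 = T.verts.card := by
  obtain ⟨⟨hwf, hne, hconn, hacy⟩, _⟩ := hT
  exact (forest_card T.edges T.verts (fun e he => hwf.1 e he)
    (fun u v huv hr => hacy u v huv (by rw [reachAvoiding_eq]; exact hr)) hne).2
    (fun u hu v hv => hconn u hu v hv)

lemma toPhi_weight (hT : IsXTree T) : weight (toPhi T) = 0 := by
  have hcard := toPhi_card hT
  have hphi : phiCount (toPhi T) = 0 := by
    unfold phiCount
    rw [Finset.card_eq_zero, Finset.filter_eq_empty_iff]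
    intro v hv h
    simp only [toPhi, Option.map_eq_some_iff] at h
    obtain ⟨a, _, ha⟩ := h
    cases ha
  unfold weight PGraph.numComponents
  rw [hphi]
  have hv : (toPhi T).verts = T.verts := rfl
  have he : (toPhi T).edges = T.edges := rfl
  rw [hv, he]
  omega

end ToPhi

lemma reduced_no_step {X : Type} {G F' : PGraph (Option X)} (hred : Reduced G)
    (h : Relation.ReflTransGen SuppressStep G F') : F' = G := by
  induction h using Relation.ReflTransGen.head_induction_on with
  | refl => rfl
  | @head G₁ G₂ hstep _ _ =>
    exfalso
    rcases hstep with ⟨v, a, b, hv, hvnone, hab, hav, hbv, hflt, _⟩ |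
      ⟨v, hv, hvnone, hdeg, _⟩
    · have h3 := hred v hv hvnone
      have : G₁.degree v = ({s(v, a), s(v, b)} : Finset (Sym2 ℕ)).card := by
        unfold PGraph.degree
        rw [hflt]
      have hvavb : s(v, a) ≠ s(v, b) := by
        intro he
        rcases Sym2.eq_iff.1 he with ⟨h1, h2⟩ | ⟨h1, h2⟩
        · exact hab h2
        · exact hav h2
      rw [Finset.card_insert_of_notMem (by simpa using hvavb), Finset.card_singleton] at this
      omega
    · have h3 := hred v hv hvnone
      omega

lemma eaf_weight {X : Type} {T : PGraph X} {F : PGraph (Option X)}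
    (hT : IsXTree T) (hPF : IsPhiForest F) (hEF : EndpointForestOf F (toPhi T)) :
    0 ≤ weight F ∧ (weight F = 0 → PGraph.Isom (toPhi T) F) := by
  obtain ⟨E, G, F'', hcut, hy, hiso⟩ := hEF
  rcases E.eq_empty_or_nonempty with rfl | hE
  · -- no cut: G = toPhi T and no suppression applies
    obtain ⟨hok, φf, hinj, hfresh, hverts, hedges, hlab1, hlab2, hlab3⟩ := hcut
    have hGeq : G = toPhi T := by
      have hv : G.verts = (toPhi T).verts := by
        rw [hverts]; simp
      apply PGraph.ext' hv
      · rw [hedges]; simp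
      · funext v
        by_cases hvT : v ∈ (toPhi T).verts
        · exact hlab1 v hvT
        · rw [toPhi_label_none hT hvT]
          apply hlab3
          rw [hv] at *
          exact hvT
    obtain ⟨hchain, _⟩ := hy
    rw [hGeq] at hchain
    have hF'' : F'' = toPhi T := reduced_no_step (toPhi_reduced hT) hchain
    rw [hF''] at hiso
    have hw : weight F = weight (toPhi T) :=
      (isom_weight (toPhi_wf hT) hPF.1 hiso).symm
    rw [hw, toPhi_weight hT]
    exact ⟨le_refl _, fun _ => hiso⟩
  · -- nonempty cut: weight F ≥ 1
    have hlt := part1 (toPhi T) G F'' E (toPhi_phiForest hT) hE hcut hy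
    rw [toPhi_weight hT] at hlt
    obtain ⟨hwfG, hacyG, _, _⟩ := cut_key (toPhi_phiForest hT) hcut
    obtain ⟨hwfF'', hacyF'', _⟩ := yields_key hy.1 hwfG hacyG
    have hw : weight F = weight F'' := (isom_weight hwfF'' hPF.1 hiso).symm
    constructor
    · omega
    · intro h0
      rw [hw] at h0
      omega

/-! ### the trivial (cut-everything) endpoint forest -/

section Trivial

variable {X : Type}

/-- the graph of isolated labeled leaves of `T` -/
def leafG (T : PGraph X) : PGraph (Option X) :=
  ⟨T.verts.filter (fun v => ((toPhi T).label v).isSome), ∅, (toPhi T).label⟩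

lemma noedge_yields : ∀ (n : ℕ) (H : PGraph (Option X)),
    (H.verts.filter (fun v => H.label v = none)).card = n → H.edges = ∅ →
    Yields H ⟨H.verts.filter (fun v => (H.label v).isSome), ∅, H.label⟩ := by
  intro n
  induction n with
  | zero =>
    intro H hcard hedges
    have hall : ∀ v ∈ H.verts, (H.label v).isSome := by
      intro v hv
      rw [Finset.card_eq_zero, Finset.filter_eq_empty_iff] at hcard
      have := hcard hv
      rwa [← Option.ne_none_iff_isSome]
    have heq : (⟨H.verts.filter (fun v => (H.label v).isSome), ∅, H.label⟩ : PGraph (Option X)) = H := by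
      apply PGraph.ext'
      · exact Finset.filter_true_of_mem hall
      · exact hedges.symm
      · rfl
    rw [heq]
    refine ⟨.refl, ?_⟩
    intro v hv hnone
    have := hall v hv
    rw [hnone] at this
    simp at this
  | succ n ih =>
    intro H hcard hedges
    have hne : (H.verts.filter (fun v => H.label v = none)).Nonempty := by
      rw [← Finset.card_pos, hcard]; omega
    obtain ⟨v, hvmem⟩ := hne
    obtain ⟨hv, hvnone⟩ := Finset.mem_filter.1 hvmem
    set H₂ : PGraph (Option X) := ⟨H.verts.erase v, ∅, H.label⟩ with hH₂
    have hstep : SuppressStep H H₂ := by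
      refine Or.inr ⟨v, hv, hvnone, ?_, rfl, ?_, rfl⟩
      · unfold PGraph.degree
        rw [hedges]
        simp
      · rw [hedges]; rfl
    have hcard2 : (H₂.verts.filter (fun v => H₂.label v = none)).card = n := by
      show ((H.verts.erase v).filter (fun v => H.label v = none)).card = n
      rw [Finset.filter_erase, Finset.card_erase_of_mem hvmem, hcard]
      omega
    have hih := ih H₂ hcard2 rfl
    have htarg : (⟨H₂.verts.filter (fun v => (H₂.label v).isSome), ∅, H₂.label⟩ : PGraph (Option X))
        = ⟨H.verts.filter (fun v => (H.label v).isSome), ∅, H.label⟩ := by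
      apply PGraph.ext'
      · show (H.verts.erase v).filter (fun v => (H.label v).isSome) = _
        rw [Finset.filter_erase, Finset.erase_eq_of_notMem]
        simp only [Finset.mem_filter, not_and]
        intro _
        rw [hvnone]
        simp
      · rfl
      · rfl
    rw [htarg] at hih
    exact ⟨.head hstep hih.1, hih.2⟩

lemma cutall {T : PGraph X} (hT : IsXTree T) {Fl : PGraph (Option X)}
    (hiso : PGraph.Isom (leafG T) Fl) : EndpointForestOf Fl (toPhi T) := by
  classical
  set E : Finset EEdge := T.edges.image (fun e => (⟨e, none⟩ : EEdge)) with hE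
  have hEmem : ∀ ee ∈ E, ee.e ∈ T.edges ∧ ee.keep = none := by
    intro ee hee
    obtain ⟨e, he, rfl⟩ := Finset.mem_image.1 hee
    exact ⟨he, rfl⟩
  set N : ℕ := T.verts.sup id + 1 with hN
  set φf : EEdge → ℕ := fun ee => if h : ee ∈ E then N + (E.equivFin ⟨ee, h⟩ : ℕ) else 0 with hφf
  have hfresh : ∀ ee ∈ E, φf ee ∉ T.verts := by
    intro ee hee hmem
    have h1 : id (φf ee) ≤ T.verts.sup id := Finset.le_sup hmem
    rw [hφf] at h1
    simp only [dif_pos hee, id] at h1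
    omega
  have hinj : Set.InjOn φf ↑E := by
    intro a ha b hb hab
    rw [hφf] at hab
    simp only [dif_pos (Finset.mem_coe.1 ha), dif_pos (Finset.mem_coe.1 hb)] at hab
    have : (E.equivFin ⟨a, Finset.mem_coe.1 ha⟩ : ℕ) = (E.equivFin ⟨b, Finset.mem_coe.1 hb⟩ : ℕ) := by omega
    have h2 : E.equivFin ⟨a, Finset.mem_coe.1 ha⟩ = E.equivFin ⟨b, Finset.mem_coe.1 hb⟩ :=
      Fin.ext this
    have := E.equivFin.injective h2
    exact congrArg Subtype.val this
  set G : PGraph (Option X) := ⟨T.verts, ∅, (toPhi T).label⟩ with hG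
  have hfilt : E.filter (fun ee => ee.keep ≠ none) = ∅ := by
    rw [Finset.filter_eq_empty_iff]
    intro ee hee
    simp [(hEmem ee hee).2]
  have himE : E.image (fun ee => ee.e) = T.edges := by
    apply Finset.ext
    intro e
    constructor
    · intro he
      obtain ⟨ee, hee, rfl⟩ := Finset.mem_image.1 he
      exact (hEmem ee hee).1
    · intro he
      exact Finset.mem_image.2 ⟨⟨e, none⟩, Finset.mem_image_of_mem _ he, rfl⟩
  have hcut : CutEEdges (toPhi T) E G := by
    refine ⟨⟨?_, ?_, ?_⟩, φf, hinj, hfresh, ?_, ?_, ?_, ?_, ?_⟩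
    · intro ee hee
      obtain ⟨he, hkeep⟩ := hEmem ee hee
      refine ⟨he, ((toPhi_wf hT).1 _ he).1, ?_⟩
      intro k hk
      rw [hkeep] at hk
      cases hk
    · intro ee hee k hk
      rw [(hEmem ee hee).2] at hk
      cases hk
    · intro ee hee ee' hee' heq
      obtain ⟨e, he, rfl⟩ := Finset.mem_image.1 hee
      obtain ⟨e', he', rfl⟩ := Finset.mem_image.1 hee'
      simp only at heq
      rw [heq]
    · rw [hfilt]
      simp only [Finset.image_empty, Finset.union_empty]
      rfl
    · rw [hfilt, himE]
      simp only [Finset.image_empty, Finset.union_empty]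
      rw [show (toPhi T).edges = T.edges from rfl, Finset.sdiff_self]
    · intro v _; rfl
    · intro ee hee hk
      exact absurd (hEmem ee hee).2 hk
    · intro v hv
      exact toPhi_label_none hT hv
  have hy : Yields G (leafG T) := by
    have := noedge_yields (G.verts.filter (fun v => G.label v = none)).card G rfl (by rfl)
    exact this
  exact ⟨E, G, leafG T, hcut, hy, hiso⟩

lemma leafG_phiForest {T : PGraph X} (hT : IsXTree T) : IsPhiForest (leafG T) := by
  have hwfT := toPhi_wf hT
  refine ⟨⟨?_, ?_⟩, ?_, ?_, ?_, ?_, ?_, ?_⟩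
  · intro e he
    cases he
  · intro v hv
    refine Finset.mem_filter.2 ⟨hwfT.2 v hv, hv⟩
  · intro u v huv
    cases huv
  · intro v hv
    left
    unfold PGraph.degree
    simp [leafG]
  · intro v hv
    have hdeg : (leafG T).degree v = 0 := by
      unfold PGraph.degree
      simp [leafG]
    constructor
    · intro _; omega
    · intro _
      exact (Finset.mem_filter.1 hv).2
  · intro v hv h
    exfalso
    have : ((toPhi T).label v) = some none := h
    simp only [toPhi, Option.map_eq_some_iff] at this
    obtain ⟨a, _, ha⟩ := this
    cases ha
  · intro v hv x h
    exact Set.mem_univ x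
  · intro x _
    obtain ⟨v, ⟨hv1, hv2⟩, hv3⟩ := hT.2.2.2.2 x (Set.mem_univ x)
    refine ⟨v, ⟨Finset.mem_filter.2 ⟨hv1, by simp [toPhi, hv2]⟩, by simp [leafG, toPhi, hv2]⟩, ?_⟩
    intro u ⟨hu1, hu2⟩
    refine hv3 u ⟨(Finset.mem_filter.1 hu1).1, ?_⟩
    have : ((toPhi T).label u) = some (some x) := hu2
    simpa [toPhi, Option.map_eq_some_iff] using this

lemma toPhi_isSome {X : Type} {T : PGraph X} {v : ℕ}
    (h : ((toPhi T).label v).isSome) : ∃ x, T.label v = some x := by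
  rcases hh : T.label v with _ | x
  · exfalso
    rw [show (toPhi T).label v = (T.label v).map some from rfl, hh] at h
    simp at h
  · exact ⟨x, rfl⟩

lemma leafG_isom {T1 T2 : PGraph X} (hT1 : IsXTree T1) (hT2 : IsXTree T2) :
    PGraph.Isom (leafG T2) (leafG T1) := by
  classical
  have hu1 := hT1.2.2.2.2
  have hu2 := hT2.2.2.2.2
  set pick : X → ℕ := fun x => (hu1 x (Set.mem_univ x)).exists.choose with hpickdef
  have hpick : ∀ x, pick x ∈ T1.verts ∧ T1.label (pick x) = some x := fun x =>
    (hu1 x (Set.mem_univ x)).exists.choose_spec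
  have huniq1 : ∀ x v, v ∈ T1.verts → T1.label v = some x → v = pick x := by
    intro x v hv hl
    obtain ⟨w, hw, hwuniq⟩ := hu1 x (Set.mem_univ x)
    rw [hwuniq v ⟨hv, hl⟩, hwuniq (pick x) ⟨(hpick x).1, (hpick x).2⟩]
  set f : ℕ → ℕ := fun v => (T2.label v).elim 0 pick with hf
  have hmem2 : ∀ v ∈ (leafG T2).verts, ∃ x, T2.label v = some x := by
    intro v hv
    exact toPhi_isSome (Finset.mem_filter.1 hv).2
  have hfval : ∀ v x, T2.label v = some x → f v = pick x := by
    intro v x h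
    rw [hf]
    simp [h]
  refine ⟨f, ⟨?_, ?_, ?_⟩, ?_, ?_⟩
  · intro v hv
    obtain ⟨x, hx⟩ := hmem2 v hv
    rw [hfval v x hx]
    refine Finset.mem_coe.2 (Finset.mem_filter.2 ⟨(hpick x).1, ?_⟩)
    simp [toPhi, (hpick x).2]
  · intro v hv v' hv' heq
    obtain ⟨x, hx⟩ := hmem2 v hv
    obtain ⟨x', hx'⟩ := hmem2 v' hv'
    rw [hfval v x hx, hfval v' x' hx'] at heq
    have hxx : x = x' := by
      have h1 := (hpick x).2
      have h2 := (hpick x').2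
      rw [heq] at h1
      rw [h1] at h2
      exact (Option.some_injective _ h2.symm).symm
    subst hxx
    obtain ⟨w, hw, hwuniq⟩ := hu2 x (Set.mem_univ x)
    rw [hwuniq v ⟨(Finset.mem_filter.1 (Finset.mem_coe.1 hv)).1, hx⟩,
      hwuniq v' ⟨(Finset.mem_filter.1 (Finset.mem_coe.1 hv')).1, hx'⟩]
  · intro u hu
    have hu1m := Finset.mem_filter.1 (Finset.mem_coe.1 hu)
    obtain ⟨x, hx⟩ := toPhi_isSome hu1m.2
    obtain ⟨w, ⟨hw1, hw2⟩, hwuniq⟩ := hu2 x (Set.mem_univ x)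
    refine ⟨w, ?_, ?_⟩
    · refine Finset.mem_coe.2 (Finset.mem_filter.2 ⟨hw1, ?_⟩)
      simp [toPhi, hw2]
    · rw [hfval w x hw2, ← huniq1 x u hu1m.1 hx]
  · intro u hu v hv
    constructor
    · intro h; cases h
    · intro h; cases h
  · intro v hv
    obtain ⟨x, hx⟩ := hmem2 v hv
    rw [hfval v x hx]
    show ((toPhi T1).label (pick x)) = ((toPhi T2).label v)
    simp [toPhi, (hpick x).2, hx]

end Trivial

lemma cut_empty {X : Type} {T : PGraph X} (hT : IsXTree T) :
    CutEEdges (toPhi T) (∅ : Finset EEdge) (toPhi T) := by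
  refine ⟨⟨?_, ?_, ?_⟩, fun _ => 0, ?_, ?_, ?_, ?_, ?_, ?_, ?_⟩
  · intro ee hee; cases hee
  · intro ee hee; cases hee
  · intro ee hee; cases hee
  · intro a ha; cases ha
  · intro ee hee; cases hee
  · simp
  · simp
  · intro v _; rfl
  · intro ee hee; cases hee
  · intro v hv
    exact toPhi_label_none hT hv

lemma toPhi_isom_up {X : Type} {T1 T2 : PGraph X} (h : PGraph.Isom T1 T2) :
    PGraph.Isom (toPhi T1) (toPhi T2) := by
  obtain ⟨f, hbij, hedge, hlab⟩ := h
  refine ⟨f, hbij, hedge, ?_⟩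
  intro v hv
  show (T2.label (f v)).map some = (T1.label v).map some
  rw [hlab v hv]

lemma toPhi_isom_down {X : Type} {T1 T2 : PGraph X} (h : PGraph.Isom (toPhi T1) (toPhi T2)) :
    PGraph.Isom T1 T2 := by
  obtain ⟨f, hbij, hedge, hlab⟩ := h
  refine ⟨f, hbij, hedge, ?_⟩
  intro v hv
  have := hlab v hv
  have h2 : (T2.label (f v)).map some = (T1.label v).map some := this
  exact Option.map_injective (Option.some_injective _) h2

theorem main_statement {X : Type} :
    (∀ (F G F' : PGraph (Option X)) (E : Finset EEdge),
        IsPhiForest F → E.Nonempty → CutEEdges F E G → Yields G F' →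
        weight F < weight F') ∧
    (∀ T1 T2 : PGraph X, IsXTree T1 → IsXTree T2 →
        (minEAFWeight T1 T2 = 0 ↔ PGraph.Isom T1 T2)) := by
  constructor
  · intro F G F' E hF hE hcut hy
    exact part1 F G F' E hF hE hcut hy
  · intro T1 T2 hT1 hT2
    set S : Set ℤ := {w | ∃ F, IsEAF F T1 T2 ∧ weight F = w} with hS
    have hlb : ∀ w ∈ S, (0 : ℤ) ≤ w := by
      rintro w ⟨F, hF, rfl⟩
      exact (eaf_weight hT1 hF.1 hF.2.1).1
    have hbdd : BddBelow S := ⟨0, hlb⟩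
    have hne : S.Nonempty :=
      ⟨weight (leafG T1), leafG T1,
        ⟨leafG_phiForest hT1, cutall hT1 (isom_refl _), cutall hT2 (leafG_isom hT1 hT2)⟩, rfl⟩
    have hmin : minEAFWeight T1 T2 = sInf S := rfl
    constructor
    · intro h0
      have hmem := Int.csInf_mem hne hbdd
      rw [← hmin, h0] at hmem
      obtain ⟨F, hF, hw0⟩ := hmem
      have h1 := (eaf_weight hT1 hF.1 hF.2.1).2 hw0
      have h2 := (eaf_weight hT2 hF.1 hF.2.2).2 hw0
      exact toPhi_isom_down (isom_trans h1 (isom_symm h2))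
    · intro hiso
      have h0 : (0 : ℤ) ∈ S :=
        ⟨toPhi T1,
          ⟨toPhi_phiForest hT1,
            ⟨∅, toPhi T1, toPhi T1, cut_empty hT1, ⟨.refl, toPhi_reduced hT1⟩, isom_refl _⟩,
            ⟨∅, toPhi T2, toPhi T2, cut_empty hT2, ⟨.refl, toPhi_reduced hT2⟩,
              isom_symm (toPhi_isom_up hiso)⟩⟩,
          toPhi_weight hT1⟩
      have hle : sInf S ≤ 0 := csInf_le hbdd h0
      have hge : (0 : ℤ) ≤ sInf S := le_csInf hne hlb
      rw [hmin]
      omega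


/-- Cutting a nonempty endpoint edge set strictly
increases the weight of an `X`-φ-forest: if `F` is an `X`-φ-forest and
`E` is a nonempty endpoint edge set of `F`, then `ω(F ÷ E) > ω(F)`.
Consequently, `ω(T1,T2) = 0` if and only if `T1 = T2`. -/
theorem cut_strictly_increases_weight {X : Type} :
    (∀ (F G F' : PGraph (Option X)) (E : Finset EEdge),
        IsPhiForest F → E.Nonempty → CutEEdges F E G → Yields G F' →
        weight F < weight F') ∧
    (∀ T1 T2 : PGraph X, IsXTree T1 → IsXTree T2 →
        (minEAFWeight T1 T2 = 0 ↔ PGraph.Isom T1 T2)) :=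
  main_statement

end USPR
end
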